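/- arXiv:1312.6899 — 6 statements merged into one kernel-verified Lean document; each statement's English description precedes it below -/
import Mathlib

section
/- For every n≥1: (a) the polynomial t_n(q)∈ℝ[q] has degree at most C(n+1,2) in q (equivalently, g_{n+1}=q^{−C(n+1,2)}t_n(q) is a polynomial in 1/q of degree at most C(n+1,2)); (b) its constant term satisfies t_n(0)=τ_n, where τ_0=1 and τ_n=∑_{i=1}^{n} φ_i τ_{n−i} (i.e. t_n(0) is the coefficient of z^n in 1/(1−φ(z))); and (c) if φ_i≥0 for all i≥1, then all coefficients of t_n are nonnegative. -/
open Filter Finset Polynomial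

noncomputable section

/-- `L_i(n_1,…,n_i) = C(n,2) − ∑ C(n_j,2) + ∑ (j−1) n_j` where `n = n_1 + ⋯ + n_i`
(0-indexed tuples, so the weight of the `j`-th entry is `j`).  The value is always
nonnegative, so natural subtraction is exact. -/
def Ldeg (i : ℕ) (ns : Fin i → ℕ) : ℕ :=
  (Nat.choose (∑ j : Fin i, ns j) 2 + ∑ j : Fin i, (j : ℕ) * ns j) - ∑ j : Fin i, Nat.choose (ns j) 2

/-- The sequence of polynomials `t_n ∈ ℝ[q]`: `t_0 = 1` and for `n ≥ 1`,
`t_n = ∑_{i=1}^n φ_i ∑_{n_1+⋯+n_{i+1} = n-i} t_{n_1} ⋯ t_{n_{i+1}} q^{L_{i+1}(n_1,…,n_{i+1})}`. -/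
def IsTSeq (φ : ℕ → ℝ) (t : ℕ → Polynomial ℝ) : Prop :=
  t 0 = 1 ∧ ∀ n, 1 ≤ n →
    t n = ∑ i ∈ Finset.Icc 1 n, Polynomial.C (φ i) *
      ∑ ns ∈ Finset.Nat.antidiagonalTuple (i + 1) (n - i),
        (∏ j, t (ns j)) * Polynomial.X ^ Ldeg (i + 1) ns

/- Auxiliary lemmas -/

lemma choose2_succ (n : ℕ) : (n + 1).choose 2 = n.choose 2 + n := by
  rw [Nat.choose_succ_succ n 1, Nat.choose_one_right]
  exact Nat.add_comm n (n.choose 2)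

lemma choose2_add_le (a b : ℕ) : a.choose 2 + b.choose 2 ≤ (a + b).choose 2 := by
  induction b with
  | zero => simp
  | succ b ih =>
    have h1 := choose2_succ b
    have h2 := choose2_succ (a + b)
    have e : a + (b + 1) = (a + b) + 1 := by ring
    rw [e, h2, h1]
    omega

lemma sum_choose2_le {ι : Type*} (s : Finset ι) (f : ι → ℕ) :
    ∑ j ∈ s, (f j).choose 2 ≤ (∑ j ∈ s, f j).choose 2 := by
  induction s using Finset.cons_induction with
  | empty => simp
  | cons a s ha ih =>
    rw [Finset.sum_cons, Finset.sum_cons]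
    calc (f a).choose 2 + ∑ j ∈ s, (f j).choose 2
        ≤ (f a).choose 2 + (∑ j ∈ s, f j).choose 2 := by omega
      _ ≤ _ := choose2_add_le _ _

lemma choose2_step (m i : ℕ) : (m + 1).choose 2 + i * m ≤ (m + i + 1).choose 2 := by
  induction i with
  | zero => simp
  | succ i ih =>
    have h := choose2_succ (m + i + 1)
    have e : m + (i + 1) + 1 = (m + i + 1) + 1 := by ring
    rw [e, h, Nat.succ_mul]
    omega

/-- Key degree inequality. -/
lemma key_deg {i n : ℕ} (hi : 1 ≤ i) (hin : i ≤ n) (ns : Fin (i + 1) → ℕ)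
    (hsum : ∑ j, ns j = n - i) :
    (∑ j, (ns j + 1).choose 2) + Ldeg (i + 1) ns ≤ (n + 1).choose 2 := by
  set m := n - i with hm
  have hS : ∑ j, (ns j).choose 2 ≤ m.choose 2 := by
    rw [← hsum]; exact sum_choose2_le _ _
  have hT : (∑ j : Fin (i + 1), (j : ℕ) * ns j) ≤ i * m := by
    calc (∑ j : Fin (i + 1), (j : ℕ) * ns j)
        ≤ ∑ j : Fin (i + 1), i * ns j :=
          Finset.sum_le_sum fun j _ => Nat.mul_le_mul_right _ (by omega : (j : ℕ) ≤ i)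
      _ = i * m := by rw [← Finset.mul_sum, hsum]
  have h1 : ∑ j, (ns j + 1).choose 2 = (∑ j, (ns j).choose 2) + m := by
    calc ∑ j, (ns j + 1).choose 2 = ∑ j, ((ns j).choose 2 + ns j) :=
          Finset.sum_congr rfl fun j _ => choose2_succ (ns j)
      _ = (∑ j, (ns j).choose 2) + ∑ j, ns j := Finset.sum_add_distrib
      _ = _ := by rw [hsum]
  have hfin := choose2_step m i
  have hcs := choose2_succ m
  have hml : m + i + 1 = n + 1 := by omega
  rw [hml] at hfin
  unfold Ldeg
  rw [hsum, h1]
  omega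

/-- The special tuple `(m, 0, …, 0)` has `Ldeg = 0`. -/
lemma Ldeg_ns0 (i m : ℕ) :
    Ldeg (i + 1) (fun j => if j = 0 then m else 0) = 0 := by
  unfold Ldeg
  have h1 : (∑ j : Fin (i + 1), if j = 0 then m else 0) = m := by
    rw [Finset.sum_ite_eq' Finset.univ (0 : Fin (i + 1)) (fun _ => m)]
    simp
  have h2 : (∑ j : Fin (i + 1), (j : ℕ) * if j = 0 then m else 0) = 0 := by
    apply Finset.sum_eq_zero
    intro j _
    by_cases h : j = 0 <;> simp [h]
  have h3 : (∑ j : Fin (i + 1), Nat.choose (if j = 0 then m else 0) 2) = m.choose 2 := by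
    have : ∀ j : Fin (i + 1), Nat.choose (if j = 0 then m else 0) 2
        = if j = 0 then m.choose 2 else 0 := by
      intro j; by_cases h : j = 0 <;> simp [h]
    rw [Finset.sum_congr rfl fun j _ => this j,
      Finset.sum_ite_eq' Finset.univ (0 : Fin (i + 1)) (fun _ => m.choose 2)]
    simp
  rw [h1, h2, h3]
  omega

/-- Conversely, a tuple with `Ldeg = 0` must be the special tuple. -/
lemma Ldeg_eq_zero {i m : ℕ} (ns : Fin (i + 1) → ℕ) (hsum : ∑ j, ns j = m)
    (h : Ldeg (i + 1) ns = 0) : ns = fun j => if j = 0 then m else 0 := by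
  have hS : ∑ j, (ns j).choose 2 ≤ m.choose 2 := by
    rw [← hsum]; exact sum_choose2_le _ _
  unfold Ldeg at h
  rw [hsum] at h
  have hT : (∑ j : Fin (i + 1), (j : ℕ) * ns j) = 0 := by omega
  have hz : ∀ j : Fin (i + 1), (j : ℕ) * ns j = 0 := by
    intro j
    exact (Finset.sum_eq_zero_iff.mp hT) j (Finset.mem_univ j)
  have hzero : ∀ j : Fin i, ns j.succ = 0 := by
    intro j
    have hj := hz j.succ
    have hne : ((j.succ : Fin (i + 1)) : ℕ) ≠ 0 := by
      rw [Fin.val_succ]; omega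
    exact (Nat.mul_eq_zero.mp hj).resolve_left hne
  have h0 : ns 0 = m := by
    rw [Fin.sum_univ_succ] at hsum
    rw [Finset.sum_congr rfl fun j _ => hzero j] at hsum
    simpa using hsum
  funext j
  by_cases hj : j = 0
  · subst hj; simp [h0]
  · rw [if_neg hj]
    obtain ⟨j', rfl⟩ := Fin.eq_succ_of_ne_zero hj
    exact hzero j'

/- Nonnegativity helpers -/

lemma nn_mul {p q : Polynomial ℝ} (hp : ∀ k, 0 ≤ p.coeff k) (hq : ∀ k, 0 ≤ q.coeff k) :
    ∀ k, 0 ≤ (p * q).coeff k := by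
  intro k
  rw [coeff_mul]
  exact Finset.sum_nonneg fun x _ => mul_nonneg (hp _) (hq _)

lemma nn_prod {ι : Type*} (s : Finset ι) (f : ι → Polynomial ℝ)
    (hf : ∀ j ∈ s, ∀ k, 0 ≤ (f j).coeff k) : ∀ k, 0 ≤ (∏ j ∈ s, f j).coeff k := by
  induction s using Finset.cons_induction with
  | empty =>
    intro k
    rw [Finset.prod_empty, coeff_one]
    split <;> norm_num
  | cons a s ha ih =>
    rw [Finset.prod_cons]
    exact nn_mul (hf a (Finset.mem_cons_self a s))
      (ih fun j hj => hf j (Finset.mem_cons_of_mem hj))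

/-- for `n ≥ 1`, (a) `t_n` has degree at most `C(n+1,2)` in `q`;
(b) its constant term is the renewal sequence value `τ_n`, i.e. the coefficient of
`z^n` in `1/(1−φ(z))`; (c) if all `φ_i ≥ 0` (`i ≥ 1`) then all coefficients of `t_n`
are nonnegative. -/
theorem stmt1 (φ : ℕ → ℝ) (t : ℕ → Polynomial ℝ) (τ : ℕ → ℝ)
    (hφ0 : φ 0 = 0) (ht : IsTSeq φ t)
    (hτ0 : τ 0 = 1) (hτ : ∀ n, 1 ≤ n → τ n = ∑ i ∈ Finset.Icc 1 n, φ i * τ (n - i)) :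
    ∀ n : ℕ, 1 ≤ n →
      (t n).natDegree ≤ Nat.choose (n + 1) 2 ∧
      (t n).coeff 0 = τ n ∧
      ((∀ i, 1 ≤ i → 0 ≤ φ i) → ∀ k, 0 ≤ (t n).coeff k) := by
  obtain ⟨ht0, htrec⟩ := ht
  suffices H : ∀ n : ℕ,
      (t n).natDegree ≤ Nat.choose (n + 1) 2 ∧
      (t n).coeff 0 = τ n ∧
      ((∀ i, 1 ≤ i → 0 ≤ φ i) → ∀ k, 0 ≤ (t n).coeff k) from fun n _ => H n
  intro n
  induction n using Nat.strong_induction_on with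
  | _ n IH =>
    rcases Nat.eq_zero_or_pos n with rfl | hn
    · refine ⟨by simp [ht0], by simp [ht0, hτ0], fun _ k => ?_⟩
      rw [ht0, coeff_one]
      split <;> norm_num
    -- n ≥ 1
    refine ⟨?_, ?_, ?_⟩
    · -- (a) degree bound
      rw [htrec n hn]
      apply natDegree_sum_le_of_forall_le
      intro i hi
      obtain ⟨hi1, hin⟩ := Finset.mem_Icc.mp hi
      refine natDegree_mul_le.trans ?_
      rw [natDegree_C, zero_add]
      apply natDegree_sum_le_of_forall_le
      intro ns hns
      rw [Finset.Nat.mem_antidiagonalTuple] at hns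
      refine natDegree_mul_le.trans ?_
      rw [natDegree_X_pow]
      have hdp : (∏ j, t (ns j)).natDegree ≤ ∑ j, (ns j + 1).choose 2 := by
        refine (natDegree_prod_le _ _).trans ?_
        apply Finset.sum_le_sum
        intro j _
        have hle : ns j ≤ n - i := hns ▸
          Finset.single_le_sum (f := ns) (fun _ _ => Nat.zero_le _) (Finset.mem_univ j)
        exact (IH (ns j) (by omega)).1
      calc (∏ j, t (ns j)).natDegree + Ldeg (i + 1) ns
          ≤ (∑ j, (ns j + 1).choose 2) + Ldeg (i + 1) ns := Nat.add_le_add_right hdp _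
        _ ≤ _ := key_deg hi1 hin ns hns
    · -- (b) constant term
      rw [htrec n hn, hτ n hn, coeff_zero_eq_eval_zero, eval_finset_sum]
      refine Finset.sum_congr rfl fun i hi => ?_
      obtain ⟨hi1, hin⟩ := Finset.mem_Icc.mp hi
      rw [eval_mul, eval_C]
      congr 1
      set m := n - i with hm
      have hmlt : m < n := by omega
      rw [eval_finset_sum]
      rw [Finset.sum_eq_single_of_mem (fun j : Fin (i + 1) => if j = 0 then m else 0)
        ?_ ?_]
      · show eval 0 ((∏ j : Fin (i + 1), t (if j = 0 then m else 0)) *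
            X ^ Ldeg (i + 1) fun j => if j = 0 then m else 0) = τ m
        rw [eval_mul, eval_pow, eval_X, Ldeg_ns0 i m, pow_zero, mul_one, eval_prod,
          Fin.prod_univ_succ, if_pos rfl]
        have hrest : ∀ j : Fin i,
            (t (if (j.succ : Fin (i + 1)) = 0 then m else 0)).eval 0 = 1 := by
          intro j
          rw [if_neg (Fin.succ_ne_zero j), ht0, eval_one]
        rw [Finset.prod_congr rfl fun j _ => hrest j, Finset.prod_const_one, mul_one,
          ← coeff_zero_eq_eval_zero, (IH m hmlt).2.1]
      · rw [Finset.Nat.mem_antidiagonalTuple]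
        rw [Finset.sum_ite_eq' Finset.univ (0 : Fin (i + 1)) (fun _ => m)]
        simp
      · intro ns hns hne
        rw [Finset.Nat.mem_antidiagonalTuple] at hns
        have hL : Ldeg (i + 1) ns ≠ 0 := fun h => hne (Ldeg_eq_zero ns hns h)
        rw [eval_mul, eval_pow, eval_X, zero_pow hL, mul_zero]
    · -- (c) nonnegativity
      intro hφ k
      rw [htrec n hn, finset_sum_coeff]
      apply Finset.sum_nonneg
      intro i hi
      obtain ⟨hi1, hin⟩ := Finset.mem_Icc.mp hi
      refine nn_mul (fun k => ?_) (fun k => ?_) k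
      · rw [coeff_C]
        split
        · exact hφ i hi1
        · exact le_rfl
      · rw [finset_sum_coeff]
        apply Finset.sum_nonneg
        intro ns hns
        rw [Finset.Nat.mem_antidiagonalTuple] at hns
        refine nn_mul (fun k => ?_) (fun k => ?_) _
        · refine nn_prod Finset.univ _ (fun j _ => ?_) k
          have hle : ns j ≤ n - i := hns ▸
            Finset.single_le_sum (f := ns) (fun _ _ => Nat.zero_le _) (Finset.mem_univ j)
          exact (IH (ns j) (by omega)).2.2 hφ
        · rw [coeff_X_pow]
          split <;> norm_num
end
end

section
/- Let j<k≤i be positive integers and (n_1,…,n_i) a tuple of nonnegative integers with n_k≥1. Then L_i(n_1,…,n_i) = L_i(R_{j,k}(n_1,…,n_i)) + n_j − n_k − j + k + 1, and L_i(n_1,…,n_i) = L_i(τ_{j,k}(n_1,…,n_i)) + (k−j)(n_k − n_j). -/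
open Finset

/-- `L_i(n_1,…,n_i) = C(n,2) − ∑ C(n_l,2) + ∑ (l−1) n_l` where `n = n_1 + ⋯ + n_i`,
as an integer (0-indexed tuples, so the weight of the `l`-th entry is `l`). -/
def LdegZ (i : ℕ) (ns : Fin i → ℕ) : ℤ :=
  (Nat.choose (∑ l : Fin i, ns l) 2 : ℤ) + ∑ l : Fin i, (l : ℕ) * (ns l : ℤ)
    - ∑ l : Fin i, (Nat.choose (ns l) 2 : ℤ)

lemma sum_double_update {i : ℕ} (F : Fin i → ℕ → ℤ) (ns : Fin i → ℕ) (j k : Fin i)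
    (h : j ≠ k) (a b : ℕ) :
    ∑ l : Fin i, F l (Function.update (Function.update ns j a) k b l)
      = ∑ l : Fin i, F l (ns l) + F j a - F j (ns j) + F k b - F k (ns k) := by
  have key : ∀ l : Fin i, F l (Function.update (Function.update ns j a) k b l)
      = F l (ns l) + (if l = j then F j a - F j (ns j) else 0)
        + (if l = k then F k b - F k (ns k) else 0) := by
    intro l
    rcases eq_or_ne l k with rfl | hlk
    · simp [Function.update_self, h.symm]
    · rcases eq_or_ne l j with rfl | hlj
      · simp [Function.update_of_ne hlk, Function.update_self, hlk]
      · simp [Function.update_of_ne hlk, Function.update_of_ne hlj, hlk, hlj]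
  rw [Finset.sum_congr rfl (fun l _ => key l)]
  rw [Finset.sum_add_distrib, Finset.sum_add_distrib,
    Finset.sum_ite_eq' Finset.univ j, Finset.sum_ite_eq' Finset.univ k]
  simp
  ring

lemma sum_double_update_nat {i : ℕ} (ns : Fin i → ℕ) (j k : Fin i)
    (h : j ≠ k) (a b : ℕ) :
    ∑ l : Fin i, Function.update (Function.update ns j a) k b l + ns j + ns k
      = ∑ l : Fin i, ns l + a + b := by
  have := sum_double_update (fun _ x => (x : ℤ)) ns j k h a b
  have h2 : ((∑ l : Fin i, Function.update (Function.update ns j a) k b l : ℕ) : ℤ)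
      = ∑ l : Fin i, ((Function.update (Function.update ns j a) k b l : ℕ) : ℤ) := by
    push_cast; rfl
  have h3 : ((∑ l : Fin i, ns l : ℕ) : ℤ) = ∑ l : Fin i, ((ns l : ℕ) : ℤ) := by
    push_cast; rfl
  omega

/-- for `j < k ≤ i` and `n_k ≥ 1`, the raising operator `R_{j,k}`
(increase the `j`-th entry by 1, decrease the `k`-th by 1) and the transposition
`τ_{j,k}` change `L_i` by `L_i = L_i∘R_{j,k} + n_j − n_k − j + k + 1` and
`L_i = L_i∘τ_{j,k} + (k − j)(n_k − n_j)`. -/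
theorem stmt10 (i : ℕ) (ns : Fin i → ℕ) (j k : Fin i) (hjk : j < k) (hk : 1 ≤ ns k) :
    LdegZ i ns =
      LdegZ i (Function.update (Function.update ns j (ns j + 1)) k (ns k - 1))
        + (ns j : ℤ) - (ns k : ℤ) - ((j : ℕ) : ℤ) + ((k : ℕ) : ℤ) + 1 ∧
    LdegZ i ns =
      LdegZ i (ns ∘ Equiv.swap j k)
        + (((k : ℕ) : ℤ) - ((j : ℕ) : ℤ)) * ((ns k : ℤ) - (ns j : ℤ)) := by
  have hne : j ≠ k := hjk.ne
  obtain ⟨m, hm⟩ : ∃ m, ns k = m + 1 := ⟨ns k - 1, by omega⟩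
  constructor
  · -- raising operator
    have hsum : ∑ l : Fin i, Function.update (Function.update ns j (ns j + 1)) k (ns k - 1) l
        = ∑ l : Fin i, ns l := by
      have := sum_double_update_nat ns j k hne (ns j + 1) (ns k - 1)
      omega
    have hw := sum_double_update (fun l x => (l : ℕ) * (x : ℤ)) ns j k hne (ns j + 1) (ns k - 1)
    have hc := sum_double_update (fun _ x => (Nat.choose x 2 : ℤ)) ns j k hne (ns j + 1) (ns k - 1)
    have hC1 : ((Nat.choose (ns j + 1) 2 : ℕ) : ℤ) = (Nat.choose (ns j) 2 : ℤ) + ns j := by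
      rw [Nat.choose_succ_succ (ns j) 1, Nat.choose_one_right]; push_cast; ring
    have hC2 : ((Nat.choose (ns k - 1) 2 : ℕ) : ℤ) = (Nat.choose (ns k) 2 : ℤ) - ((ns k : ℤ) - 1) := by
      rw [hm]
      simp only [Nat.add_sub_cancel, Nat.choose_succ_succ m 1, Nat.choose_one_right]
      push_cast; ring
    have hcast : ((ns k - 1 : ℕ) : ℤ) = (ns k : ℤ) - 1 := by omega
    simp only [LdegZ, hsum, hw, hc, hC1, hC2, hcast]
    push_cast
    ring
  · -- transposition
    have hrw : ns ∘ Equiv.swap j k = Function.update (Function.update ns j (ns k)) k (ns j) := by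
      funext l
      rcases eq_or_ne l k with rfl | hlk
      · simp [Equiv.swap_apply_right]
      · rcases eq_or_ne l j with rfl | hlj
        · simp [Equiv.swap_apply_left, Function.update_of_ne hne, hne]
        · simp [Equiv.swap_apply_of_ne_of_ne hlj hlk, Function.update_of_ne hlk,
            Function.update_of_ne hlj]
    have hsum : ∑ l : Fin i, (ns ∘ Equiv.swap j k) l = ∑ l : Fin i, ns l :=
      Equiv.sum_comp (Equiv.swap j k) ns
    have hw := sum_double_update (fun l x => (l : ℕ) * (x : ℤ)) ns j k hne (ns k) (ns j)
    have hc := sum_double_update (fun _ x => (Nat.choose x 2 : ℤ)) ns j k hne (ns k) (ns j)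
    simp only [LdegZ, hrw] at *
    rw [hsum, hw, hc]
    ring
end

section
/- Assume φ_i≥0 for all i≥1, φ_n>0 for all sufficiently large n, and for each integer j≥0 the limit lim_{n→∞} φ_{j+n}/φ_n exists in [0,∞). Then, with ε_n=t_n−∑_{i=1}^{n} φ_i t_{n−i}∈ℝ[q]: (i) [q^0]ε_n = 1 if n=0 and 0 otherwise; (ii) for every integer j≥0 there exists c_j≥0 such that lim_{n→∞} [q^j]ε_n/φ_{n−j} = c_j; (iii) for every integer j≥0 there exists c̃_j≥0 such that for all n≥1, 0 ≤ [q^j]ε_n ≤ c̃_j·∑_{i=n−j}^{n−1} φ_i. -/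
open Filter Finset Polynomial

noncomputable section

/-- The sequence of polynomials `t_n ∈ ℝ[q]`: `t_0 = 1` and for `n ≥ 1`,
`t_n = ∑_{i=1}^n φ_i ∑_{n_1+⋯+n_{i+1} = n-i} t_{n_1} ⋯ t_{n_{i+1}} q^{L_{i+1}(n_1,…,n_{i+1})}`. -/
lemma choose_add_two (m r : ℕ) :
    (m + r).choose 2 = m.choose 2 + r.choose 2 + m * r := by
  induction r with
  | zero => simp
  | succ r ih =>
    have h1 : (m + (r+1)) = (m + r) + 1 := by omega
    rw [h1]
    have h2 : ∀ k : ℕ, (k+1).choose 2 = k.choose 2 + k := by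
      intro k
      rw [Nat.choose_succ_succ]
      simp [Nat.choose_one_right, Nat.add_comm]
    rw [h2, ih, h2 r]
    ring

lemma sum_choose_two_le {ι : Type*} (s : Finset ι) (f : ι → ℕ) :
    ∑ k ∈ s, (f k).choose 2 ≤ (∑ k ∈ s, f k).choose 2 := by
  induction s using Finset.cons_induction with
  | empty => simp
  | cons a s ha ih =>
    rw [Finset.sum_cons, Finset.sum_cons, choose_add_two]
    omega

/-- the distinguished tuple `(s,0,…,0)` -/
def deltaT (i s : ℕ) : Fin (i+1) → ℕ := fun k => if k = 0 then s else 0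

lemma sum_deltaT (i s : ℕ) : ∑ k, deltaT i s k = s := by
  rw [Fin.sum_univ_succ]
  simp [deltaT, Fin.succ_ne_zero]

lemma deltaT_mem (i s : ℕ) : deltaT i s ∈ Finset.Nat.antidiagonalTuple (i+1) s := by
  rw [Finset.Nat.mem_antidiagonalTuple]; exact sum_deltaT i s

lemma Ldeg_deltaT (i s : ℕ) : Ldeg (i+1) (deltaT i s) = 0 := by
  unfold Ldeg
  rw [sum_deltaT]
  have h1 : ∑ j : Fin (i+1), (j : ℕ) * deltaT i s j = 0 := by
    rw [Fin.sum_univ_succ]; simp [deltaT, Fin.succ_ne_zero]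
  have h2 : ∑ j : Fin (i+1), (deltaT i s j).choose 2 = s.choose 2 := by
    rw [Fin.sum_univ_succ]; simp [deltaT, Fin.succ_ne_zero]
  rw [h1, h2]; omega

lemma weight_le_Ldeg (i : ℕ) (ns : Fin i → ℕ) :
    ∑ j : Fin i, (j : ℕ) * ns j ≤ Ldeg i ns := by
  have := sum_choose_two_le Finset.univ ns
  unfold Ldeg
  omega

lemma ne_deltaT_iff {i s : ℕ} (ns : Fin (i+1) → ℕ)
    (hmem : ns ∈ Finset.Nat.antidiagonalTuple (i+1) s) (hne : ns ≠ deltaT i s) :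
    ∃ k : Fin (i+1), 1 ≤ (k : ℕ) ∧ 1 ≤ ns k := by
  rw [Finset.Nat.mem_antidiagonalTuple] at hmem
  by_contra h
  push_neg at h
  apply hne
  funext k
  by_cases hk : k = 0
  · subst hk
    have : ∑ j, ns j = ns 0 + ∑ j : Fin i, ns j.succ := Fin.sum_univ_succ ns
    have hz : ∀ j : Fin i, ns j.succ = 0 := by
      intro j
      have := h j.succ (by simp [Fin.val_succ])
      omega
    simp only [Finset.sum_congr rfl (fun j _ => hz j), Finset.sum_const_zero] at this
    simp [deltaT]; omega
  · have hk1 : 1 ≤ (k : ℕ) := by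
      rcases Fin.eq_zero_or_eq_succ k with h0 | ⟨j, rfl⟩
      · exact absurd h0 hk
      · simp [Fin.val_succ]
    have := h k hk1
    simp [deltaT, hk]; omega

lemma Ldeg_ge_of_ne {i s : ℕ} (ns : Fin (i+1) → ℕ)
    (hmem : ns ∈ Finset.Nat.antidiagonalTuple (i+1) s) (hne : ns ≠ deltaT i s) :
    s ≤ Ldeg (i+1) ns := by
  obtain ⟨k, hk1, hm1⟩ := ne_deltaT_iff ns hmem hne
  rw [Finset.Nat.mem_antidiagonalTuple] at hmem
  have hsplit := Finset.add_sum_erase Finset.univ ns (Finset.mem_univ k)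
  have hmle : ns k ≤ s := by omega
  obtain ⟨r, hr⟩ : ∃ r, s = ns k + r := ⟨s - ns k, by omega⟩
  have herase : ∑ j ∈ Finset.univ.erase k, ns j = r := by omega
  have hCsum : ∑ j : Fin (i+1), (ns j).choose 2 ≤ (ns k).choose 2 + r.choose 2 := by
    have h1 := Finset.add_sum_erase Finset.univ (fun j => (ns j).choose 2) (Finset.mem_univ k)
    have h2 := sum_choose_two_le (Finset.univ.erase k) ns
    rw [herase] at h2
    omega
  have hW : ns k ≤ ∑ j : Fin (i+1), (j : ℕ) * ns j := by
    have h3 := Finset.single_le_sum (f := fun j : Fin (i+1) => (j : ℕ) * ns j)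
      (fun j _ => Nat.zero_le _) (Finset.mem_univ k)
    have h4 : ns k ≤ (k : ℕ) * ns k := Nat.le_mul_of_pos_left _ (by omega)
    exact le_trans h4 h3
  have hCs : s.choose 2 = (ns k).choose 2 + r.choose 2 + ns k * r := by
    rw [hr]; exact choose_add_two _ r
  have hmr : r ≤ ns k * r := Nat.le_mul_of_pos_left r (by omega)
  unfold Ldeg
  rw [hmem]
  omega

/-! ### nonnegative coefficients -/

def NNP (p : Polynomial ℝ) : Prop := ∀ k, 0 ≤ p.coeff k

lemma NNP_one : NNP 1 := by
  intro k; rw [Polynomial.coeff_one]; positivity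

lemma NNP_C {a : ℝ} (ha : 0 ≤ a) : NNP (Polynomial.C a) := by
  intro k; rw [Polynomial.coeff_C]; positivity

lemma NNP_sum {ι : Type*} (s : Finset ι) (f : ι → Polynomial ℝ)
    (h : ∀ a ∈ s, NNP (f a)) : NNP (∑ a ∈ s, f a) := by
  intro k
  rw [Polynomial.finset_sum_coeff]
  exact Finset.sum_nonneg fun a ha => h a ha k

lemma NNP_mul {p q : Polynomial ℝ} (hp : NNP p) (hq : NNP q) : NNP (p * q) := by
  intro k
  rw [Polynomial.coeff_mul]
  exact Finset.sum_nonneg fun x _ => mul_nonneg (hp _) (hq _)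

lemma NNP_prod {ι : Type*} (s : Finset ι) (f : ι → Polynomial ℝ)
    (h : ∀ a ∈ s, NNP (f a)) : NNP (∏ a ∈ s, f a) := by
  induction s using Finset.cons_induction with
  | empty => simpa using NNP_one
  | cons a s ha ih =>
    rw [Finset.prod_cons]
    exact NNP_mul (h a (Finset.mem_cons_self a s))
      (ih fun b hb => h b (Finset.mem_cons_of_mem hb))

lemma NNP_X_pow (m : ℕ) : NNP ((Polynomial.X : Polynomial ℝ) ^ m) := by
  intro k
  rw [Polynomial.coeff_X_pow]
  positivity


lemma t_coeff_nonneg {φ : ℕ → ℝ} {t : ℕ → Polynomial ℝ} (ht : IsTSeq φ t)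
    (hnn : ∀ i, 1 ≤ i → 0 ≤ φ i) : ∀ n, NNP (t n) := by
  intro n
  induction n using Nat.strong_induction_on with
  | _ n ih =>
    rcases Nat.eq_zero_or_pos n with rfl | hn
    · rw [ht.1]; exact NNP_one
    · rw [ht.2 n hn]
      apply NNP_sum
      intro i hi
      rw [Finset.mem_Icc] at hi
      apply NNP_mul (NNP_C (hnn i hi.1))
      apply NNP_sum
      intro ns hns
      apply NNP_mul _ (NNP_X_pow _)
      apply NNP_prod
      intro k _
      apply ih
      rw [Finset.Nat.mem_antidiagonalTuple] at hns
      have : ns k ≤ n - i :=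
        hns ▸ Finset.single_le_sum (fun j _ => Nat.zero_le _) (Finset.mem_univ k)
      omega

/-! ### the coefficient functions -/

noncomputable def gfun (t : ℕ → Polynomial ℝ) (j i : ℕ) (ns : Fin (i+1) → ℕ) : ℝ :=
  if Ldeg (i+1) ns ≤ j then (∏ k, t (ns k)).coeff (j - Ldeg (i+1) ns) else 0

lemma gfun_eq_coeff (t : ℕ → Polynomial ℝ) (j i : ℕ) (ns : Fin (i+1) → ℕ) :
    gfun t j i ns = ((∏ k, t (ns k)) * Polynomial.X ^ Ldeg (i+1) ns).coeff j := by
  rw [Polynomial.coeff_mul_X_pow', gfun]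

lemma gfun_nonneg {φ : ℕ → ℝ} {t : ℕ → Polynomial ℝ} (ht : IsTSeq φ t)
    (hnn : ∀ i, 1 ≤ i → 0 ≤ φ i) (j i : ℕ) (ns : Fin (i+1) → ℕ) :
    0 ≤ gfun t j i ns := by
  unfold gfun
  split
  · exact NNP_prod _ _ (fun k _ => t_coeff_nonneg ht hnn (ns k)) _
  · exact le_refl 0

noncomputable def Afun (t : ℕ → Polynomial ℝ) (j i s : ℕ) : ℝ :=
  ∑ ns ∈ (Finset.Nat.antidiagonalTuple (i+1) s).erase (deltaT i s), gfun t j i ns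

lemma Afun_nonneg {φ : ℕ → ℝ} {t : ℕ → Polynomial ℝ} (ht : IsTSeq φ t)
    (hnn : ∀ i, 1 ≤ i → 0 ≤ φ i) (j i s : ℕ) : 0 ≤ Afun t j i s :=
  Finset.sum_nonneg fun ns _ => gfun_nonneg ht hnn j i ns

lemma Afun_eq_zero_of_gt (t : ℕ → Polynomial ℝ) {j s : ℕ} (i : ℕ) (hs : j < s) :
    Afun t j i s = 0 := by
  apply Finset.sum_eq_zero
  intro ns hns
  rw [Finset.mem_erase] at hns
  have := Ldeg_ge_of_ne ns hns.2 hns.1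
  rw [gfun, if_neg (by omega)]

lemma Afun_zero_right (t : ℕ → Polynomial ℝ) (j i : ℕ) : Afun t j i 0 = 0 := by
  unfold Afun
  rw [Finset.Nat.antidiagonalTuple_zero_right]
  have h : deltaT i 0 = 0 := funext fun k => by simp [deltaT]
  rw [h]
  simp

lemma eps_coeff {φ : ℕ → ℝ} {t : ℕ → Polynomial ℝ} (ht : IsTSeq φ t)
    {n : ℕ} (hn : 1 ≤ n) (j : ℕ) :
    (t n - ∑ i ∈ Finset.Icc 1 n, Polynomial.C (φ i) * t (n - i)).coeff j
      = ∑ i ∈ Finset.Icc 1 n, φ i * Afun t j i (n - i) := by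
  have hδ : ∀ i s : ℕ, (∏ k, t (deltaT i s k)) * Polynomial.X ^ Ldeg (i+1) (deltaT i s)
      = t s := by
    intro i s
    rw [Ldeg_deltaT, pow_zero, mul_one, Fin.prod_univ_succ]
    simp [deltaT, Fin.succ_ne_zero, ht.1]
  have key : t n - ∑ i ∈ Finset.Icc 1 n, Polynomial.C (φ i) * t (n - i)
      = ∑ i ∈ Finset.Icc 1 n, Polynomial.C (φ i) *
          ∑ ns ∈ (Finset.Nat.antidiagonalTuple (i+1) (n-i)).erase (deltaT i (n-i)),
            (∏ k, t (ns k)) * Polynomial.X ^ Ldeg (i+1) ns := by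
    rw [ht.2 n hn, ← Finset.sum_sub_distrib]
    apply Finset.sum_congr rfl
    intro i _
    rw [← mul_sub]
    congr 1
    have := Finset.add_sum_erase _
      (fun ns : Fin (i+1) → ℕ => (∏ k, t (ns k)) * Polynomial.X ^ Ldeg (i+1) ns)
      (deltaT_mem i (n-i))
    rw [← this, hδ]
    ring
  rw [key, Polynomial.finset_sum_coeff]
  apply Finset.sum_congr rfl
  intro i _
  rw [Polynomial.coeff_C_mul, Polynomial.finset_sum_coeff, Afun]
  congr 1
  exact Finset.sum_congr rfl fun ns _ => (gfun_eq_coeff t j i ns).symm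

lemma eps_coeff' {φ : ℕ → ℝ} {t : ℕ → Polynomial ℝ} (ht : IsTSeq φ t) (hφ0 : φ 0 = 0)
    {n : ℕ} (hn : 1 ≤ n) (j : ℕ) :
    (t n - ∑ i ∈ Finset.Icc 1 n, Polynomial.C (φ i) * t (n - i)).coeff j
      = ∑ i ∈ Finset.Icc (n-j) (n-1), φ i * Afun t j i (n - i) := by
  rw [eps_coeff ht hn j]
  have h1 : ∑ i ∈ Finset.Icc 1 n, φ i * Afun t j i (n - i)
      = ∑ i ∈ Finset.Icc 0 n, φ i * Afun t j i (n - i) := by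
    apply Finset.sum_subset
    · intro x hx; rw [Finset.mem_Icc] at *; omega
    · intro x hx hx'
      rw [Finset.mem_Icc] at hx hx'
      have : x = 0 := by omega
      rw [this, hφ0, zero_mul]
  rw [h1]
  symm
  apply Finset.sum_subset
  · intro x hx; rw [Finset.mem_Icc] at *; omega
  · intro x hx hx'
    rw [Finset.mem_Icc] at hx hx'
    rcases Nat.lt_or_ge x (n - j) with h | h
    · rw [Afun_eq_zero_of_gt t x (by omega), mul_zero]
    · have : x = n := by omega
      rw [this, Nat.sub_self, Afun_zero_right, mul_zero]

/-! ### padding -/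

def padT (j i : ℕ) (ms : Fin (j+1) → ℕ) : Fin (i+1) → ℕ :=
  fun k => if hk : (k : ℕ) < j + 1 then ms ⟨(k : ℕ), hk⟩ else 0

def truncT (j i : ℕ) (hji : j ≤ i) (ns : Fin (i+1) → ℕ) : Fin (j+1) → ℕ :=
  fun k => ns (Fin.castLE (by omega) k)

lemma sum_padT {M : Type*} [AddCommMonoid M] {j i : ℕ} (hji : j ≤ i)
    (ms : Fin (j+1) → ℕ) (F : ℕ → ℕ → M) (hF : ∀ k, F k 0 = 0) :
    ∑ k : Fin (i+1), F (k : ℕ) (padT j i ms k) = ∑ k : Fin (j+1), F (k : ℕ) (ms k) := by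
  have e1 : ∀ k : Fin (i+1), F (k : ℕ) (padT j i ms k)
      = (fun m => F m (if hm : m < j+1 then ms ⟨m, hm⟩ else 0)) (k : ℕ) := fun k => rfl
  rw [Finset.sum_congr rfl (fun k _ => e1 k),
      Fin.sum_univ_eq_sum_range (fun m => F m (if hm : m < j+1 then ms ⟨m, hm⟩ else 0)) (i+1)]
  rw [← Finset.sum_subset (Finset.range_subset_range.2 (by omega : j + 1 ≤ i + 1))]
  · rw [← Fin.sum_univ_eq_sum_range (fun m => F m (if hm : m < j+1 then ms ⟨m, hm⟩ else 0)) (j+1)]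
    apply Finset.sum_congr rfl
    intro k _
    simp only [k.isLt, dif_pos, Fin.eta]
  · intro x _ hx
    rw [Finset.mem_range] at hx
    rw [dif_neg (by omega), hF]

lemma prod_padT_t {j i : ℕ} (hji : j ≤ i) (ms : Fin (j+1) → ℕ)
    {t : ℕ → Polynomial ℝ} (ht0 : t 0 = 1) :
    ∏ k : Fin (i+1), t (padT j i ms k) = ∏ k : Fin (j+1), t (ms k) := by
  have e1 : ∀ k : Fin (i+1), t (padT j i ms k)
      = (fun m => t (if hm : m < j+1 then ms ⟨m, hm⟩ else 0)) (k : ℕ) := fun k => rfl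
  rw [Finset.prod_congr rfl (fun k _ => e1 k),
      Fin.prod_univ_eq_prod_range (fun m => t (if hm : m < j+1 then ms ⟨m, hm⟩ else 0)) (i+1)]
  rw [← Finset.prod_subset (Finset.range_subset_range.2 (by omega : j + 1 ≤ i + 1))]
  · rw [← Fin.prod_univ_eq_prod_range (fun m => t (if hm : m < j+1 then ms ⟨m, hm⟩ else 0)) (j+1)]
    apply Finset.prod_congr rfl
    intro k _
    simp only [k.isLt, dif_pos, Fin.eta]
  · intro x _ hx
    rw [Finset.mem_range] at hx
    rw [dif_neg (by omega), ht0]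

lemma Ldeg_padT {j i : ℕ} (hji : j ≤ i) (ms : Fin (j+1) → ℕ) :
    Ldeg (i+1) (padT j i ms) = Ldeg (j+1) ms := by
  unfold Ldeg
  rw [sum_padT hji ms (fun _ v => v) (fun _ => rfl),
      sum_padT hji ms (fun k v => k * v) (fun _ => mul_zero _),
      sum_padT hji ms (fun _ v => v.choose 2) (fun _ => rfl)]

lemma trunc_padT {j i : ℕ} (hji : j ≤ i) (ms : Fin (j+1) → ℕ) :
    truncT j i hji (padT j i ms) = ms := by
  funext k
  simp only [truncT, padT, Fin.coe_castLE, k.isLt, dif_pos, Fin.eta]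

lemma padT_trunc {j i : ℕ} (hji : j ≤ i) (ns : Fin (i+1) → ℕ)
    (hsupp : ∀ k : Fin (i+1), j + 1 ≤ (k : ℕ) → ns k = 0) :
    padT j i (truncT j i hji ns) = ns := by
  funext k
  by_cases hk : (k : ℕ) < j + 1
  · simp only [padT, dif_pos hk, truncT]
    congr 1
  · simp only [padT, dif_neg hk]
    exact (hsupp k (by omega)).symm

lemma trunc_deltaT {j i : ℕ} (hji : j ≤ i) (s : ℕ) :
    truncT j i hji (deltaT i s) = deltaT j s := by
  funext k
  simp only [truncT, deltaT, Fin.ext_iff, Fin.coe_castLE, Fin.val_zero]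

lemma gfun_padT {j i jj : ℕ} (hji : j ≤ i) (ms : Fin (j+1) → ℕ)
    {t : ℕ → Polynomial ℝ} (ht0 : t 0 = 1) :
    gfun t jj i (padT j i ms) = gfun t jj j ms := by
  unfold gfun
  rw [Ldeg_padT hji, prod_padT_t hji ms ht0]

lemma Afun_stab {j i s : ℕ} (hji : j ≤ i) {t : ℕ → Polynomial ℝ} (ht0 : t 0 = 1) :
    Afun t j i s = Afun t j j s := by
  classical
  unfold Afun
  rw [← Finset.sum_filter_of_ne
    (p := fun ns : Fin (i+1) → ℕ => ∀ k : Fin (i+1), j + 1 ≤ (k : ℕ) → ns k = 0)]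
  · apply Finset.sum_nbij' (i := truncT j i hji) (j := padT j i)
    · intro ns hns
      rw [Finset.mem_filter, Finset.mem_erase, Finset.Nat.mem_antidiagonalTuple] at hns
      obtain ⟨⟨hne, hsum⟩, hsupp⟩ := hns
      have hpt := padT_trunc hji ns hsupp
      rw [Finset.mem_erase, Finset.Nat.mem_antidiagonalTuple]
      constructor
      · intro h
        apply hne
        rw [← hpt, h]
        -- padT (deltaT j s) = deltaT i s
        rw [← trunc_deltaT hji s, padT_trunc hji (deltaT i s)]
        intro k hk
        have : k ≠ 0 := by
          intro h0; rw [h0] at hk; simp at hk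
        simp [deltaT, this]
      · have h2 : ∑ k : Fin (j+1), truncT j i hji ns k = ∑ k : Fin (i+1), ns k := by
          conv_rhs => rw [← hpt]
          exact (sum_padT hji (truncT j i hji ns) (fun _ v => v) (fun _ => rfl)).symm
        rw [h2]
        exact hsum
    · intro ms hms
      rw [Finset.mem_erase, Finset.Nat.mem_antidiagonalTuple] at hms
      obtain ⟨hne, hsum⟩ := hms
      rw [Finset.mem_filter, Finset.mem_erase, Finset.Nat.mem_antidiagonalTuple]
      refine ⟨⟨?_, ?_⟩, ?_⟩
      · intro h
        apply hne
        rw [← trunc_padT hji ms, h, trunc_deltaT hji]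
      · rw [sum_padT hji ms (fun _ v => v) (fun _ => rfl)]
        exact hsum
      · intro k hk
        simp only [padT, dif_neg (by omega : ¬ ((k:ℕ) < j + 1))]
    · intro ns hns
      rw [Finset.mem_filter] at hns
      exact padT_trunc hji ns hns.2
    · intro ms _
      exact trunc_padT hji ms
    · intro ns hns
      rw [Finset.mem_filter] at hns
      conv_lhs => rw [← padT_trunc hji ns hns.2]
      exact gfun_padT hji _ ht0
  · intro ns hns h
    by_contra hsupp
    push_neg at hsupp
    obtain ⟨k, hk, hnsk⟩ := hsupp
    apply h
    have hW := weight_le_Ldeg (i+1) ns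
    have hterm : (k : ℕ) * ns k ≤ ∑ l : Fin (i+1), (l : ℕ) * ns l :=
      Finset.single_le_sum (f := fun l : Fin (i+1) => (l : ℕ) * ns l)
        (fun l _ => Nat.zero_le _) (Finset.mem_univ k)
    have hbig : j + 1 ≤ (k : ℕ) * ns k :=
      le_trans hk (Nat.le_mul_of_pos_right _ (by omega))
    rw [gfun, if_neg (by omega)]


/-- with `ε_n = t_n − ∑_{i=1}^n φ_i t_{n−i} ∈ ℝ[q]`, assuming `φ_i ≥ 0`,
eventual positivity, and existence of the ratio limits `lim φ_{j+n}/φ_n ∈ [0,∞)`: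
(i) `[q^0]ε_n = 𝟙{n = 0}`; (ii) for each `j` there is `c_j ≥ 0` with
`[q^j]ε_n / φ_{n−j} → c_j`; (iii) for each `j` there is `c̃_j ≥ 0` with
`0 ≤ [q^j]ε_n ≤ c̃_j ∑_{i=n−j}^{n−1} φ_i` for all `n ≥ 1`. -/
theorem stmt12 (φ : ℕ → ℝ) (t : ℕ → Polynomial ℝ)
    (hφ0 : φ 0 = 0) (ht : IsTSeq φ t)
    (hnonneg : ∀ i, 1 ≤ i → 0 ≤ φ i)
    (hpos : ∃ N, ∀ n, N ≤ n → 0 < φ n)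
    (hratio : ∀ j : ℕ, ∃ l : ℝ, 0 ≤ l ∧
      Tendsto (fun n : ℕ => φ (j + n) / φ n) atTop (nhds l)) :
    (∀ n : ℕ,
      ((t n - ∑ i ∈ Finset.Icc 1 n, Polynomial.C (φ i) * t (n - i)).coeff 0)
        = if n = 0 then 1 else 0) ∧
    (∀ j : ℕ, ∃ c : ℝ, 0 ≤ c ∧
      Tendsto (fun n : ℕ =>
          (t n - ∑ i ∈ Finset.Icc 1 n, Polynomial.C (φ i) * t (n - i)).coeff j
            / φ (n - j))
        atTop (nhds c)) ∧
    (∀ j : ℕ, ∃ c : ℝ, 0 ≤ c ∧ ∀ n : ℕ, 1 ≤ n →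
      0 ≤ (t n - ∑ i ∈ Finset.Icc 1 n, Polynomial.C (φ i) * t (n - i)).coeff j ∧
      (t n - ∑ i ∈ Finset.Icc 1 n, Polynomial.C (φ i) * t (n - i)).coeff j
        ≤ c * ∑ i ∈ Finset.Icc (n - j) (n - 1), φ i) := by
  have hφnn : ∀ i, 0 ≤ φ i := by
    intro i
    rcases Nat.eq_zero_or_pos i with rfl | hi
    · rw [hφ0]
    · exact hnonneg i hi
  have hA : ∀ (j i s : ℕ), 0 ≤ Afun t j i s := fun j i s => Afun_nonneg ht hnonneg j i s
  refine ⟨?_, ?_, ?_⟩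
  · -- part (i)
    intro n
    rcases Nat.eq_zero_or_pos n with rfl | hn
    · simp [ht.1]
    · rw [if_neg (by omega), eps_coeff' ht hφ0 hn 0]
      rw [Finset.Icc_eq_empty (by omega), Finset.sum_empty]
  · -- part (ii)
    intro j
    choose l hl0 hlim using hratio
    refine ⟨∑ s ∈ Finset.Icc 1 j, Afun t j j s * l (j - s), ?_, ?_⟩
    · exact Finset.sum_nonneg fun s _ => mul_nonneg (hA _ _ _) (hl0 _)
    · apply Tendsto.congr'
        (f₁ := fun n : ℕ => ∑ s ∈ Finset.Icc 1 j,
          Afun t j j s * (φ ((j - s) + (n - j)) / φ (n - j)))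
      · rw [eventuallyEq_iff_exists_mem]
        refine ⟨Set.Ici (2*j + 2), Ici_mem_atTop _, ?_⟩
        intro n hn
        simp only [Set.mem_Ici] at hn
        have hn1 : 1 ≤ n := by omega
        simp only []
        rw [eps_coeff' ht hφ0 hn1 j]
        have hstep : ∑ i ∈ Finset.Icc (n-j) (n-1), φ i * Afun t j i (n - i)
            = ∑ s ∈ Finset.Icc 1 j, Afun t j j s * φ (n - s) := by
          apply Finset.sum_nbij' (i := fun i => n - i) (j := fun s => n - s)
          · intro a ha; rw [Finset.mem_Icc] at *; omega
          · intro a ha; rw [Finset.mem_Icc] at *; omega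
          · intro a ha; rw [Finset.mem_Icc] at ha; omega
          · intro a ha; rw [Finset.mem_Icc] at ha; omega
          · intro a ha
            rw [Finset.mem_Icc] at ha
            rw [Afun_stab (by omega : j ≤ a) ht.1, mul_comm,
              (by omega : n - (n - a) = a)]
        rw [hstep, Finset.sum_div]
        apply Finset.sum_congr rfl
        intro s hs
        rw [Finset.mem_Icc] at hs
        have : (j - s) + (n - j) = n - s := by omega
        rw [this, mul_div_assoc]
      · apply tendsto_finset_sum
        intro s _
        exact ((hlim (j - s)).comp (tendsto_sub_atTop_nat j)).const_mul _
  · -- part (iii)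
    intro j
    set c : ℝ := ∑ s ∈ Finset.Icc 1 j,
      (Afun t j j s + ∑ i' ∈ Finset.Icc 0 j, Afun t j i' s) with hc
    have hcterm : ∀ s, 0 ≤ Afun t j j s + ∑ i' ∈ Finset.Icc 0 j, Afun t j i' s :=
      fun s => add_nonneg (hA _ _ _) (Finset.sum_nonneg fun i' _ => hA _ _ _)
    have hc0 : 0 ≤ c := Finset.sum_nonneg fun s _ => hcterm s
    have hAc : ∀ i s, 1 ≤ s → s ≤ j → Afun t j i s ≤ c := by
      intro i s h1 h2
      have hterm : Afun t j i s ≤ Afun t j j s + ∑ i' ∈ Finset.Icc 0 j, Afun t j i' s := by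
        rcases le_or_gt i j with h | h
        · have h3 : Afun t j i s ≤ ∑ i' ∈ Finset.Icc 0 j, Afun t j i' s :=
            Finset.single_le_sum (fun i' _ => hA j i' s)
              (Finset.mem_Icc.2 ⟨Nat.zero_le _, h⟩)
          linarith [hA j j s]
        · rw [Afun_stab (le_of_lt h) ht.1]
          have h4 : 0 ≤ ∑ i' ∈ Finset.Icc 0 j, Afun t j i' s :=
            Finset.sum_nonneg fun i' _ => hA j i' s
          linarith
      refine le_trans hterm ?_
      exact Finset.single_le_sum (fun s' _ => hcterm s') (Finset.mem_Icc.2 ⟨h1, h2⟩)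
    refine ⟨c, hc0, ?_⟩
    intro n hn
    rw [eps_coeff' ht hφ0 hn j]
    constructor
    · exact Finset.sum_nonneg fun i _ => mul_nonneg (hφnn i) (hA _ _ _)
    · calc ∑ i ∈ Finset.Icc (n-j) (n-1), φ i * Afun t j i (n - i)
          ≤ ∑ i ∈ Finset.Icc (n-j) (n-1), φ i * c := by
            apply Finset.sum_le_sum
            intro i hi
            rw [Finset.mem_Icc] at hi
            exact mul_le_mul_of_nonneg_left
              (hAc i (n - i) (by omega) (by omega)) (hφnn i)
      _ = c * ∑ i ∈ Finset.Icc (n-j) (n-1), φ i := by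
            rw [← Finset.sum_mul, mul_comm]
end
end

section
/- Let ρ∈(0,1], let L≥0 be real, let (Φ_n)_{n≥1} be a sequence of positive reals such that (nΦ_n)_{n≥1} is regularly varying of index 1−ρ (i.e. for every λ>0, lim_{n→∞} (⌊λn⌋·Φ_{⌊λn⌋})/(n·Φ_n)=λ^{1−ρ}), and let (t_n)_{n≥0} be a nonnegative real sequence such that (i) lim_{n→∞} ρΦ_n·∑_{i=0}^{n−1} t_i = L and (ii) liminf_{n→∞} nΦ_n t_n ≥ L. Then (nΦ_n t_n) converges to L on a set of integers of density 1: for every δ>0, lim_{n→∞} (1/n)·#{ i : 1≤i≤n, |iΦ_i t_i − L| ≥ δ } = 0. -/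
open Filter Finset

open scoped Classical

open MeasureTheory
open scoped ENNReal NNReal

lemma lemA (n : ℕ) (hn : 1 ≤ n) (g : ℕ → ℝ≥0∞) :
    ∫⁻ x in Set.Ioc (0:ℝ) 1, g ⌊x * (n:ℝ)⌋₊ =
      (∑ i ∈ Finset.range n, g i) * ENNReal.ofReal (1/(n:ℝ)) := by
  have hn0 : (0:ℝ) < n := by exact_mod_cast hn
  have hIoc : (Set.Ioc (0:ℝ) 1 : Set ℝ) =ᵐ[volume] Set.Ico (0:ℝ) 1 :=
    (MeasureTheory.Ioc_ae_eq_Icc).trans (MeasureTheory.Ico_ae_eq_Icc).symm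
  rw [setLIntegral_congr hIoc]
  have hdecomp : Set.Ico (0:ℝ) 1 = ⋃ i ∈ Finset.range n, Set.Ico ((i:ℝ)/n) (((i:ℝ)+1)/n) := by
    ext x
    simp only [Set.mem_iUnion, Finset.mem_range, Set.mem_Ico]
    constructor
    · rintro ⟨hx0, hx1⟩
      refine ⟨⌊x * n⌋₊, ?_, ?_, ?_⟩
      · have h1 : x * n < n := by nlinarith
        exact (Nat.floor_lt (by positivity)).mpr h1
      · rw [div_le_iff₀ hn0]; exact Nat.floor_le (by positivity)
      · rw [lt_div_iff₀ hn0]; push_cast; exact Nat.lt_floor_add_one _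
    · rintro ⟨i, hi, h1, h2⟩
      have hi' : (i:ℝ) + 1 ≤ n := by exact_mod_cast Nat.succ_le_of_lt hi
      constructor
      · exact le_trans (by positivity) h1
      · calc x < ((i:ℝ)+1)/n := h2
          _ ≤ 1 := by rw [div_le_one hn0]; exact hi'
  rw [hdecomp, lintegral_biUnion_finset ?_ (fun i _ => measurableSet_Ico)]
  · rw [Finset.sum_mul]
    refine Finset.sum_congr rfl (fun i hi => ?_)
    have hfloor : ∀ x ∈ Set.Ico ((i:ℝ)/n) (((i:ℝ)+1)/n), g ⌊x * n⌋₊ = g i := by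
      intro x hx
      obtain ⟨h1, h2⟩ := hx
      have hx0 : 0 ≤ x := le_trans (by positivity) h1
      have : ⌊x * n⌋₊ = i := by
        rw [Nat.floor_eq_iff (by positivity)]
        constructor
        · rw [div_le_iff₀ hn0] at h1; linarith
        · rw [lt_div_iff₀ hn0] at h2; push_cast; linarith
      rw [this]
    rw [setLIntegral_congr_fun measurableSet_Ico
      (fun x hx => hfloor x hx),
      setLIntegral_const, Real.volume_Ico]
    congr 1
    congr 1
    field_simp
    ring
  · intro i _ j _ hij
    have key : ∀ a c : ℕ, a < c → Disjoint (Set.Ico ((a:ℝ)/n) (((a:ℝ)+1)/n))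
        (Set.Ico ((c:ℝ)/n) (((c:ℝ)+1)/n)) := by
      intro a c hac
      apply Set.Ico_disjoint_Ico.mpr
      have h1 : ((a:ℝ)+1)/n ≤ (c:ℝ)/n := by
        gcongr
        exact_mod_cast hac
      exact le_trans (min_le_left _ _) (le_trans h1 (le_max_right _ _))
    rcases lt_or_gt_of_ne hij with h | h
    · exact key i j h
    · exact (key j i h).symm

lemma lemDCT (b : ℕ → ℝ)
    (hb : ∀ n : ℕ, 1 ≤ n → 0 < b n)
    (hlim : ∀ l : ℝ, 0 < l → l ≤ 1 →
      ∀ᶠ n : ℕ in atTop, b ⌊l * (n:ℝ)⌋₊ < 2 * b n) :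
    ∀ γ : ℝ, 0 < γ → ∀ᶠ n : ℕ in atTop,
      (((Finset.Icc 1 n).filter fun i => 2 * b n < b i).card : ℝ) ≤ γ * n := by
  intro γ hγ
  set g : ℕ → ℕ → ℝ≥0∞ := fun n i => if 2 * b n < b i then 1 else 0 with hg
  set F : ℕ → ℝ → ℝ≥0∞ := fun n x => g n ⌊x * (n:ℝ)⌋₊ with hF
  have hmeas : ∀ n, Measurable (F n) := by
    intro n
    exact (measurable_from_nat (f := g n)).comp
      (Nat.measurable_floor.comp (measurable_id.mul_const _))
  have hbound : ∀ n, F n ≤ᵐ[volume.restrict (Set.Ioc (0:ℝ) 1)] (fun _ => 1) := by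
    intro n
    refine Filter.Eventually.of_forall (fun x => ?_)
    simp only [hF, hg]
    split <;> simp
  have hfin : ∫⁻ _ in Set.Ioc (0:ℝ) 1, (1:ℝ≥0∞) ≠ ∞ := by
    simp [Real.volume_Ioc]
  have hptwise : ∀ᵐ x ∂(volume.restrict (Set.Ioc (0:ℝ) 1)),
      Tendsto (fun n => F n x) atTop (nhds 0) := by
    refine (ae_restrict_mem measurableSet_Ioc).mono (fun x hx => ?_)
    have h := hlim x hx.1 hx.2
    refine Tendsto.congr' ?_ tendsto_const_nhds
    filter_upwards [h] with n hn
    simp only [hF, hg]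
    rw [if_neg (not_lt.mpr hn.le)]
  have hT : Tendsto (fun n => ∫⁻ x in Set.Ioc (0:ℝ) 1, F n x) atTop (nhds 0) := by
    have := tendsto_lintegral_of_dominated_convergence (μ := volume.restrict (Set.Ioc (0:ℝ) 1))
      (F := F) (f := fun _ => 0) (fun _ => 1) hmeas hbound hfin hptwise
    simpa using this
  have hsmall := hT.eventually_lt_const (ENNReal.ofReal_pos.mpr (by linarith : (0:ℝ) < γ/2))
  filter_upwards [hsmall, eventually_ge_atTop 1] with n hn hn1
  have hn0 : (0:ℝ) < n := by exact_mod_cast hn1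
  have hint : ∫⁻ x in Set.Ioc (0:ℝ) 1, F n x =
      (((Finset.range n).filter fun i => 2 * b n < b i).card : ℝ≥0∞) * ENNReal.ofReal (1/(n:ℝ)) := by
    rw [lemA n hn1 (g n)]
    congr 1
    simp [hg, Finset.sum_boole]
  rw [hint] at hn
  have hcast : (((Finset.range n).filter fun i => 2 * b n < b i).card : ℝ≥0∞)
      * ENNReal.ofReal (1/(n:ℝ))
      = ENNReal.ofReal ((((Finset.range n).filter fun i => 2 * b n < b i).card : ℝ) * (1/(n:ℝ))) := by
    rw [ENNReal.ofReal_mul (by positivity), ENNReal.ofReal_natCast]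
  rw [hcast] at hn
  have hreal : (((Finset.range n).filter fun i => 2 * b n < b i).card : ℝ) * (1/(n:ℝ)) < γ/2 := by
    have := (ENNReal.ofReal_lt_ofReal_iff (by linarith : (0:ℝ) < γ/2)).mp hn
    exact this
  have hsub : ((Finset.Icc 1 n).filter fun i => 2 * b n < b i) ⊆
      ((Finset.range n).filter fun i => 2 * b n < b i) := by
    intro i hi
    simp only [Finset.mem_filter, Finset.mem_Icc, Finset.mem_range] at hi ⊢
    refine ⟨?_, hi.2⟩
    rcases eq_or_lt_of_le hi.1.2 with h | h
    · exfalso; have := hb n hn1; rw [h] at hi; linarith [hi.2]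
    · exact h
  have hcard : (((Finset.Icc 1 n).filter fun i => 2 * b n < b i).card : ℝ)
      ≤ (((Finset.range n).filter fun i => 2 * b n < b i).card : ℝ) := by
    exact_mod_cast Finset.card_le_card hsub
  have hlt : (((Finset.range n).filter fun i => 2 * b n < b i).card : ℝ) < γ/2 * n := by
    rw [mul_one_div, div_lt_iff₀ hn0] at hreal
    linarith
  nlinarith

lemma lemFatou (ρ : ℝ) (hρ0 : 0 < ρ) (hρ1 : ρ ≤ 1) (b : ℕ → ℝ)
    (hb : ∀ n : ℕ, 1 ≤ n → 0 < b n)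
    (hRV : ∀ l : ℝ, 0 < l → l ≤ 1 →
      Tendsto (fun n : ℕ => b ⌊l * (n:ℝ)⌋₊ / b n) atTop (nhds (l ^ (1 - ρ))))
    (N : ℕ) (hN : 1 ≤ N) (c : ℝ) (hc : c < 1/ρ) :
    ∀ᶠ n : ℕ in atTop, c * n ≤ ∑ i ∈ Finset.Ico N n, b n / b i := by
  have hsum_nonneg : ∀ n : ℕ, 0 ≤ ∑ i ∈ Finset.Ico N n, b n / b i := by
    intro n
    rcases le_or_gt n 0 with h | h
    · rw [show n = 0 by omega]
      simp
    · refine Finset.sum_nonneg (fun i hi => ?_)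
      rw [Finset.mem_Ico] at hi
      exact div_nonneg (hb n h).le (hb i (le_trans hN hi.1)).le
  rcases le_or_gt c 0 with hc0 | hc0
  · filter_upwards [eventually_ge_atTop 0] with n _
    have : c * n ≤ 0 := mul_nonpos_of_nonpos_of_nonneg hc0 (Nat.cast_nonneg n)
    linarith [hsum_nonneg n]
  -- main case : 0 < c
  set g : ℕ → ℕ → ℝ≥0∞ := fun n i => if N ≤ i then ENNReal.ofReal (b n / b i) else 0 with hg
  set F : ℕ → ℝ → ℝ≥0∞ := fun n x => g n ⌊x * (n:ℝ)⌋₊ with hF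
  have hmeas : ∀ n, Measurable (F n) := fun n =>
    (measurable_from_nat (f := g n)).comp
      (Nat.measurable_floor.comp (measurable_id.mul_const _))
  have hpt : ∀ x : ℝ, x ∈ Set.Ioc (0:ℝ) 1 →
      Tendsto (fun n => F n x) atTop (nhds (ENNReal.ofReal (x ^ (ρ - 1)))) := by
    intro x hx
    have hx0 : 0 < x := hx.1
    have hflo : Tendsto (fun n : ℕ => ⌊x * (n:ℝ)⌋₊) atTop atTop :=
      tendsto_nat_floor_atTop.comp
        (Tendsto.const_mul_atTop hx0 tendsto_natCast_atTop_atTop)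
    have hratio : Tendsto (fun n : ℕ => b n / b ⌊x * (n:ℝ)⌋₊) atTop (nhds (x ^ (ρ - 1))) := by
      have h1 := (hRV x hx0 hx.2).inv₀ (ne_of_gt (Real.rpow_pos_of_pos hx0 _))
      have h2 : (x ^ (1 - ρ))⁻¹ = x ^ (ρ - 1) := by
        rw [← Real.rpow_neg hx0.le]
        ring_nf
      rw [h2] at h1
      refine h1.congr (fun n => ?_)
      exact inv_div _ _
    have hev : (fun n : ℕ => F n x) =ᶠ[atTop] fun n => ENNReal.ofReal (b n / b ⌊x * (n:ℝ)⌋₊) := by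
      filter_upwards [hflo.eventually (eventually_ge_atTop N)] with n hn
      simp only [hF, hg, if_pos hn]
    refine Tendsto.congr' hev.symm ?_
    exact (ENNReal.continuous_ofReal.tendsto _).comp hratio
  have hFatou := lintegral_liminf_le (μ := volume.restrict (Set.Ioc (0:ℝ) 1)) (u := atTop) hmeas
  have hLHS : ∫⁻ x in Set.Ioc (0:ℝ) 1, liminf (fun n => F n x) atTop
      = ∫⁻ x in Set.Ioc (0:ℝ) 1, ENNReal.ofReal (x ^ (ρ - 1)) := by
    refine setLIntegral_congr_fun measurableSet_Ioc (fun x hx => ?_)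
    exact (hpt x hx).liminf_eq
  have hInt : IntervalIntegrable (fun x : ℝ => x ^ (ρ - 1)) volume 0 1 :=
    intervalIntegral.intervalIntegrable_rpow' (by linarith)
  have hval : ∫ x in (0:ℝ)..1, x ^ (ρ - 1) = 1/ρ := by
    rw [integral_rpow (Or.inl (by linarith))]
    simp [Real.zero_rpow (ne_of_gt hρ0), sub_add_cancel]
  have hIoc : ∫⁻ x in Set.Ioc (0:ℝ) 1, ENNReal.ofReal (x ^ (ρ - 1)) = ENNReal.ofReal (1/ρ) := by
    rw [← ofReal_integral_eq_lintegral_ofReal]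
    · rw [← intervalIntegral.integral_of_le zero_le_one, hval]
    · exact hInt.1
    · refine (ae_restrict_mem measurableSet_Ioc).mono (fun x hx => ?_)
      exact Real.rpow_nonneg hx.1.le _
  rw [hLHS, hIoc] at hFatou
  have hclt : ENNReal.ofReal c < liminf (fun n => ∫⁻ x in Set.Ioc (0:ℝ) 1, F n x) atTop :=
    lt_of_lt_of_le ((ENNReal.ofReal_lt_ofReal_iff_of_nonneg hc0.le).mpr hc) hFatou
  have hev := eventually_lt_of_lt_liminf hclt
  filter_upwards [hev, eventually_ge_atTop (max 1 N)] with n hn hn1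
  have hn1' : 1 ≤ n := le_trans (le_max_left _ _) hn1
  have hnN : N ≤ n := le_trans (le_max_right _ _) hn1
  have hn0 : (0:ℝ) < n := by exact_mod_cast hn1'
  have hint : ∫⁻ x in Set.Ioc (0:ℝ) 1, F n x
      = ENNReal.ofReal (∑ i ∈ Finset.Ico N n, b n / b i) * ENNReal.ofReal (1/(n:ℝ)) := by
    rw [lemA n hn1' (g n)]
    congr 1
    rw [← Finset.sum_subset (fun i hi => Finset.mem_range.mpr (Finset.mem_Ico.mp hi).2)]
    · rw [ENNReal.ofReal_sum_of_nonneg]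
      · refine Finset.sum_congr rfl (fun i hi => ?_)
        rw [Finset.mem_Ico] at hi
        simp [hg, if_pos hi.1]
      · intro i hi
        rw [Finset.mem_Ico] at hi
        exact div_nonneg (hb n hn1').le (hb i (le_trans hN hi.1)).le
    · intro i hi hni
      rw [Finset.mem_range] at hi
      rw [Finset.mem_Ico] at hni
      have : ¬ N ≤ i := fun h => hni ⟨h, hi⟩
      simp [hg, this]
  rw [hint, ← ENNReal.ofReal_mul (hsum_nonneg n)] at hn
  have := (ENNReal.ofReal_lt_ofReal_iff_of_nonneg hc0.le).mp hn
  rw [mul_one_div] at this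
  rw [lt_div_iff₀ hn0] at this
  linarith

/-- abstract density lemma: let `ρ ∈ (0,1]`, `L ≥ 0`, `(Φ_n)` positive
with `(nΦ_n)` regularly varying of index `1 − ρ`, and `(t_n)` nonnegative with
(i) `ρΦ_n ∑_{i<n} t_i → L` and (ii) `liminf nΦ_n t_n ≥ L` (expressed as: for every
`ε > 0`, eventually `L − ε ≤ nΦ_n t_n`).  Then `(nΦ_n t_n)` converges to `L` on a
set of integers of density 1. -/
theorem stmt16 (ρ L : ℝ) (Φ t : ℕ → ℝ)
    (hρ0 : 0 < ρ) (hρ1 : ρ ≤ 1) (hL : 0 ≤ L)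
    (hΦpos : ∀ n : ℕ, 1 ≤ n → 0 < Φ n)
    (hRV : ∀ l : ℝ, 0 < l →
      Tendsto (fun n : ℕ => ((⌊l * (n : ℝ)⌋₊ : ℝ) * Φ ⌊l * (n : ℝ)⌋₊) / ((n : ℝ) * Φ n))
        atTop (nhds (l ^ (1 - ρ))))
    (htnonneg : ∀ n, 0 ≤ t n)
    (hCesaro : Tendsto (fun n : ℕ => ρ * Φ n * ∑ i ∈ Finset.range n, t i)
      atTop (nhds L))
    (hliminf : ∀ ε : ℝ, 0 < ε → ∀ᶠ n : ℕ in atTop, L - ε ≤ (n : ℝ) * Φ n * t n) :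
    ∀ δ : ℝ, 0 < δ →
      Tendsto (fun n : ℕ =>
          (((Finset.Icc 1 n).filter fun i : ℕ =>
            δ ≤ |(i : ℝ) * Φ i * t i - L|).card : ℝ) / n)
        atTop (nhds 0) := by
  intro δ hδ
  by_contra hcon
  set b : ℕ → ℝ := fun n => (n : ℝ) * Φ n with hbdef
  have hbeq : ∀ i : ℕ, b i = (i : ℝ) * Φ i := fun i => rfl
  have hb : ∀ n : ℕ, 1 ≤ n → 0 < b n := by
    intro n hn
    have : (0:ℝ) < n := by exact_mod_cast hn
    exact mul_pos this (hΦpos n hn)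
  have hRV' : ∀ l : ℝ, 0 < l → l ≤ 1 →
      Tendsto (fun n : ℕ => b ⌊l * (n:ℝ)⌋₊ / b n) atTop (nhds (l ^ (1 - ρ))) :=
    fun l hl _ => hRV l hl
  -- extract a frequent lower bound on the density
  rw [Metric.tendsto_atTop] at hcon
  push_neg at hcon
  obtain ⟨ε₀, hε₀, hcon⟩ := hcon
  set D : ℕ → Finset ℕ := fun n => (Finset.Icc 1 n).filter
    (fun i : ℕ => δ ≤ |(i : ℝ) * Φ i * t i - L|) with hDdef
  have hfreq : ∃ᶠ n : ℕ in atTop, ε₀ ≤ ((D n).card : ℝ) / n := by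
    rw [frequently_atTop]
    intro N0
    obtain ⟨n, hn, h⟩ := hcon N0
    refine ⟨n, hn, ?_⟩
    rwa [Real.dist_eq, sub_zero, abs_of_nonneg (by positivity)] at h
  set β : ℝ := ε₀ / 3 with hβdef
  have hβ : 0 < β := by positivity
  set ε : ℝ := ρ * β * δ / 8 with hεdef
  have hε : 0 < ε := by positivity
  set ε₂ : ℝ := min (1/2) (ρ * β * δ / (8 * (L + 1))) with hε₂def
  have hε₂ : 0 < ε₂ := lt_min (by norm_num) (by positivity)
  have hε₂half : ε₂ ≤ 1/2 := min_le_left _ _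
  have hε₂L : ε₂ * (L + 1) ≤ ρ * β * δ / 8 := by
    have h1 : ε₂ ≤ ρ * β * δ / (8 * (L + 1)) := min_le_right _ _
    have h2 : (0:ℝ) < L + 1 := by linarith
    rw [le_div_iff₀ (by positivity)] at h1
    nlinarith
  set c : ℝ := (1 - ε₂) / ρ with hcdef
  have hρc : ρ * c = 1 - ε₂ := by rw [hcdef]; field_simp
  have hc : c < 1 / ρ := by
    rw [hcdef, div_lt_div_iff₀ hρ0 hρ0]
    nlinarith
  -- thresholds from the liminf hypothesis
  obtain ⟨N₁, hN₁⟩ := eventually_atTop.mp (hliminf (δ/2) (by linarith))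
  obtain ⟨N₂, hN₂⟩ := eventually_atTop.mp (hliminf ε hε)
  set N : ℕ := max (max N₁ N₂) 1 with hNdef
  have hN1 : 1 ≤ N := le_max_right _ _
  -- eventual bound b ⌊l n⌋ < 2 b n
  have hlim2 : ∀ l : ℝ, 0 < l → l ≤ 1 → ∀ᶠ n : ℕ in atTop, b ⌊l * (n:ℝ)⌋₊ < 2 * b n := by
    intro l hl hl1
    have h1 : l ^ (1 - ρ) < 2 :=
      lt_of_le_of_lt (Real.rpow_le_one hl.le hl1 (by linarith)) one_lt_two
    filter_upwards [(hRV' l hl hl1).eventually_lt_const h1, eventually_ge_atTop 1] with n h hn1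
    have hbn := hb n hn1
    rw [div_lt_iff₀ hbn] at h
    linarith
  have hDCT := lemDCT b hb hlim2 β hβ
  have hFat := lemFatou ρ hρ0 hρ1 b hb hRV' N hN1 c hc
  have hA : ∀ᶠ n : ℕ in atTop, ρ * Φ n * ∑ i ∈ Finset.range n, t i < L + ε :=
    hCesaro.eventually_lt_const (by linarith)
  have hbig : ∀ᶠ n : ℕ in atTop, (N : ℝ) + 1 ≤ β * n := by
    have : Tendsto (fun n : ℕ => β * (n:ℝ)) atTop atTop :=
      Tendsto.const_mul_atTop hβ tendsto_natCast_atTop_atTop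
    exact this.eventually_ge_atTop _
  have hcomb := hfreq.and_eventually (hDCT.and (hFat.and (hA.and (hbig.and
    (eventually_ge_atTop (max N 1))))))
  obtain ⟨n, hDn, hFn, hFatn, hAn, hbign, hnN⟩ := hcomb.exists
  have hn1 : 1 ≤ n := le_trans (le_max_right _ _) hnN
  have hnN' : N ≤ n := le_trans (le_max_left _ _) hnN
  have hn0 : (0:ℝ) < n := by exact_mod_cast hn1
  have hbn : 0 < b n := hb n hn1
  -- the good bad set G
  set G : Finset ℕ := (Finset.Icc 1 n).filter
    (fun i : ℕ => L + δ ≤ (i:ℝ) * Φ i * t i ∧ ¬ (2 * b n < b i) ∧ N ≤ i ∧ i ≠ n) with hGdef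
  set F : Finset ℕ := (Finset.Icc 1 n).filter (fun i : ℕ => 2 * b n < b i) with hFdef
  -- card estimate
  have hDsub : D n ⊆ G ∪ F ∪ Finset.range N ∪ {n} := by
    intro i hi
    simp only [hDdef, hGdef, hFdef, Finset.mem_union, Finset.mem_filter, Finset.mem_Icc,
      Finset.mem_range, Finset.mem_singleton] at hi ⊢
    obtain ⟨⟨hi1, hin⟩, hid⟩ := hi
    by_cases hiN : i < N
    · exact Or.inl (Or.inr hiN)
    push_neg at hiN
    by_cases hieq : i = n
    · exact Or.inr hieq
    by_cases hiF : 2 * b n < b i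
    · exact Or.inl (Or.inl (Or.inr ⟨⟨hi1, hin⟩, hiF⟩))
    · refine Or.inl (Or.inl (Or.inl ⟨⟨hi1, hin⟩, ?_, hiF, hiN, hieq⟩))
      have hge : L - δ/2 ≤ (i:ℝ) * Φ i * t i :=
        hN₁ i (le_trans (le_trans (le_max_left _ _) (le_max_left _ _)) hiN)
      rcases abs_cases ((i:ℝ) * Φ i * t i - L) with ⟨he, _⟩ | ⟨he, _⟩
      · rw [he] at hid; linarith
      · rw [he] at hid; linarith
  have hcardD : ((D n).card : ℝ) ≤ (G.card : ℝ) + (F.card : ℝ) + N + 1 := by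
    have h1 : (D n).card ≤ (G ∪ F ∪ Finset.range N ∪ {n}).card := Finset.card_le_card hDsub
    have h2 : (G ∪ F ∪ Finset.range N ∪ {n}).card ≤ G.card + F.card + N + 1 := by
      calc (G ∪ F ∪ Finset.range N ∪ {n}).card
          ≤ (G ∪ F ∪ Finset.range N).card + ({n} : Finset ℕ).card := Finset.card_union_le _ _
        _ ≤ (G ∪ F).card + (Finset.range N).card + ({n} : Finset ℕ).card := by
            gcongr; exact Finset.card_union_le _ _
        _ ≤ G.card + F.card + (Finset.range N).card + ({n} : Finset ℕ).card := by
            gcongr; exact Finset.card_union_le _ _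
        _ = G.card + F.card + N + 1 := by simp
    calc ((D n).card : ℝ) ≤ ((G ∪ F ∪ Finset.range N ∪ {n}).card : ℝ) := by exact_mod_cast h1
      _ ≤ (G.card : ℝ) + (F.card : ℝ) + N + 1 := by exact_mod_cast h2
  have hDlow : 3 * β * n ≤ ((D n).card : ℝ) := by
    have h3 : ε₀ * n ≤ ((D n).card : ℝ) := by
      rw [le_div_iff₀ hn0] at hDn
      linarith [hDn]
    calc 3 * β * n = ε₀ * n := by rw [hβdef]; ring
      _ ≤ _ := h3
  have hGlow : β * n ≤ (G.card : ℝ) := by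
    have := hbign
    linarith [hcardD, hDlow, hFn]
  -- pointwise bounds on t over G
  have hGmem : ∀ i ∈ G, L + δ ≤ b i * t i ∧ b i ≤ 2 * b n ∧ N ≤ i ∧ i < n ∧ 1 ≤ i := by
    intro i hi
    simp only [hGdef, Finset.mem_filter, Finset.mem_Icc] at hi
    obtain ⟨⟨hi1, hin⟩, h1, h2, h3, h4⟩ := hi
    exact ⟨h1, not_lt.mp h2, h3, lt_of_le_of_ne hin h4, hi1⟩
  have hGsub : G ⊆ Finset.Ico N n := by
    intro i hi
    obtain ⟨_, _, h3, h4, _⟩ := hGmem i hi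
    exact Finset.mem_Ico.mpr ⟨h3, h4⟩
  have hIcosub : Finset.Ico N n ⊆ Finset.range n := fun i hi =>
    Finset.mem_range.mpr (Finset.mem_Ico.mp hi).2
  set Tn : ℝ := ∑ i ∈ Finset.range n, t i with hTdef
  have hsum1 : ∑ i ∈ Finset.Ico N n, t i ≤ Tn :=
    Finset.sum_le_sum_of_subset_of_nonneg hIcosub (fun i _ _ => htnonneg i)
  have hρΦ : 0 < ρ * Φ n := mul_pos hρ0 (hΦpos n hn1)
  have hΦne : Φ n ≠ 0 := (hΦpos n hn1).ne'
  have hnne : (n:ℝ) ≠ 0 := hn0.ne'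
  have hρβδ : 0 < ρ * β * δ := by positivity
  rcases lt_or_ge L ε with hLε | hLε
  · -- case L < ε : only the bad points are needed
    have hGt : ∀ i ∈ G, δ / (2 * b n) ≤ t i := by
      intro i hi
      obtain ⟨h1, h2, _, _, hi1⟩ := hGmem i hi
      have hbi := hb i hi1
      have ht1 : (L + δ) / b i ≤ t i := by
        rw [div_le_iff₀ hbi]
        calc L + δ ≤ (i:ℝ) * Φ i * t i := h1
          _ = t i * b i := by rw [hbeq i]; ring
      have ht2 : δ / (2 * b n) ≤ (L + δ) / b i :=
        div_le_div₀ (by linarith) (by linarith) hbi h2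
      linarith
    have hsumG : (G.card : ℝ) * (δ / (2 * b n)) ≤ ∑ i ∈ G, t i := by
      have h := Finset.card_nsmul_le_sum G t _ hGt
      rwa [nsmul_eq_mul] at h
    have hsumG2 : ∑ i ∈ G, t i ≤ Tn :=
      Finset.sum_le_sum_of_subset_of_nonneg (hGsub.trans hIcosub) (fun i _ _ => htnonneg i)
    have h0 : (0:ℝ) ≤ δ / (2 * b n) := by positivity
    have hTlow : β * n * (δ / (2 * b n)) ≤ Tn :=
      le_trans (le_trans (mul_le_mul_of_nonneg_right hGlow h0) hsumG) hsumG2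
    have heq : ρ * Φ n * (β * n * (δ / (2 * b n))) = ρ * β * δ / 2 := by
      rw [hbeq n]; field_simp
    have hfinal : ρ * β * δ / 2 ≤ ρ * Φ n * Tn := by
      have hm := mul_le_mul_of_nonneg_left hTlow hρΦ.le
      rwa [heq] at hm
    rw [hεdef] at hAn hLε
    linarith only [hAn, hfinal, hLε, hρβδ]
  · -- case ε ≤ L
    have hNN₂ : N₂ ≤ N := le_trans (le_max_right _ _) (le_max_left _ _)
    have hgood : ∀ i ∈ Finset.Ico N n \ G, (L - ε) / b i ≤ t i := by
      intro i hi
      have hi' := (Finset.mem_sdiff.mp hi).1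
      obtain ⟨hiN, hin⟩ := Finset.mem_Ico.mp hi'
      have hi1 : 1 ≤ i := le_trans hN1 hiN
      have hbi := hb i hi1
      have h1 : L - ε ≤ (i:ℝ) * Φ i * t i := hN₂ i (le_trans hNN₂ hiN)
      rw [div_le_iff₀ hbi]
      calc L - ε ≤ (i:ℝ) * Φ i * t i := h1
        _ = t i * b i := by rw [hbeq i]; ring
    have hbad : ∀ i ∈ G, (L - ε) / b i + (δ + ε) / (2 * b n) ≤ t i := by
      intro i hi
      obtain ⟨h1, h2, _, _, hi1⟩ := hGmem i hi
      have hbi := hb i hi1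
      have ht1 : (L + δ) / b i ≤ t i := by
        rw [div_le_iff₀ hbi]
        calc L + δ ≤ (i:ℝ) * Φ i * t i := h1
          _ = t i * b i := by rw [hbeq i]; ring
      have h2' : (δ + ε) / (2 * b n) ≤ (δ + ε) / b i :=
        div_le_div₀ (by linarith) le_rfl hbi h2
      have h3 : (L - ε) / b i + (δ + ε) / b i = (L + δ) / b i := by
        rw [← add_div]
        congr 1
        ring
      linarith
    have hs1 : ∑ i ∈ Finset.Ico N n \ G, (L - ε) / b i ≤ ∑ i ∈ Finset.Ico N n \ G, t i :=
      Finset.sum_le_sum hgood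
    have hs2 : ∑ i ∈ G, ((L - ε) / b i + (δ + ε) / (2 * b n)) ≤ ∑ i ∈ G, t i :=
      Finset.sum_le_sum hbad
    have hs2' : ∑ i ∈ G, ((L - ε) / b i + (δ + ε) / (2 * b n))
        = ∑ i ∈ G, (L - ε) / b i + (G.card : ℝ) * ((δ + ε) / (2 * b n)) := by
      rw [Finset.sum_add_distrib, Finset.sum_const, nsmul_eq_mul]
    have hsplit : ∑ i ∈ Finset.Ico N n \ G, (L - ε) / b i + ∑ i ∈ G, (L - ε) / b i
        = ∑ i ∈ Finset.Ico N n, (L - ε) / b i := Finset.sum_sdiff hGsub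
    have hsplitT : ∑ i ∈ Finset.Ico N n \ G, t i + ∑ i ∈ G, t i
        = ∑ i ∈ Finset.Ico N n, t i := Finset.sum_sdiff hGsub
    have hIco : (L - ε) / (b n) * ∑ i ∈ Finset.Ico N n, b n / b i
        = ∑ i ∈ Finset.Ico N n, (L - ε) / b i := by
      rw [Finset.mul_sum]
      refine Finset.sum_congr rfl (fun i hi => ?_)
      have hbi : b i ≠ 0 := (hb i (le_trans hN1 (Finset.mem_Ico.mp hi).1)).ne'
      field_simp
    have hIco2 : (L - ε) / (b n) * (c * n) ≤ ∑ i ∈ Finset.Ico N n, (L - ε) / b i := by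
      rw [← hIco]
      exact mul_le_mul_of_nonneg_left hFatn (div_nonneg (by linarith) hbn.le)
    have hTlow : (L - ε) / (b n) * (c * n) + (G.card : ℝ) * ((δ + ε) / (2 * b n)) ≤ Tn := by
      linarith only [hs1, hs2, hs2', hsplit, hsplitT, hsum1, hIco2]
    have h0 : (0:ℝ) ≤ (δ + ε) / (2 * b n) := by positivity
    have hstep : (L - ε) / (b n) * (c * n) + (β * n) * ((δ + ε) / (2 * b n)) ≤ Tn := by
      have := mul_le_mul_of_nonneg_right hGlow h0
      linarith only [hTlow, this]
    have e1 : ρ * Φ n * ((L - ε) / (b n) * (c * n)) = ρ * c * (L - ε) := by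
      rw [hbeq n]; field_simp
    have e2 : ρ * Φ n * ((β * n) * ((δ + ε) / (2 * b n))) = ρ * β * (δ + ε) / 2 := by
      rw [hbeq n]; field_simp
    have hmul : ρ * c * (L - ε) + ρ * β * (δ + ε) / 2 ≤ ρ * Φ n * Tn := by
      have hm := mul_le_mul_of_nonneg_left hstep hρΦ.le
      rw [mul_add, e1, e2] at hm
      exact hm
    rw [hρc] at hmul
    have hx1 : (1 - ε₂) * (L - ε) = L - ε - ε₂ * L + ε₂ * ε := by ring
    have hx2 : ρ * β * (δ + ε) / 2 = ρ * β * δ / 2 + ρ * β * ε / 2 := by ring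
    have hx3 : ε₂ * L ≤ ρ * β * δ / 8 := by
      have hexp : ε₂ * (L + 1) = ε₂ * L + ε₂ := by ring
      linarith only [hε₂L, hexp, hε₂]
    have hx4 : 0 ≤ ε₂ * ε := mul_nonneg hε₂.le hε.le
    have hx5 : 0 ≤ ρ * β * ε := mul_nonneg (mul_nonneg hρ0.le hβ.le) hε.le
    rw [hεdef] at hAn hmul hx1 hx2 hx4 hx5
    linarith only [hAn, hmul, hx1, hx2, hx3, hx4, hx5, hρβδ]
end

section
/- Assume: (a) φ_n≥0 for all n≥1 with ∑_{n≥1} φ_n=1 (so ζ=min{x>0: φ(x)=1}=1); (b) limsup_{n→∞} (log φ_n)/(n log n) < −2; (c) the function θ(z)=(1−φ(z))/(1−z) extends to an entire function with no zeros in the closed disk |z|≤1. Then for every q∈[0,1) there exists r∈[0,1) such that ε_n(q) ≤ r^n for all sufficiently large n, where ε_n=t_n−∑_{i=1}^{n} φ_i t_{n−i}∈ℝ[q] and ε_n(q) is its value at q. -/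
open Filter Finset Polynomial

noncomputable section

lemma geom_bound (r : ℝ) (h0 : 0 ≤ r) (h1 : r < 1) (n : ℕ) :
    ∑ i ∈ range n, r ^ i ≤ (1 - r)⁻¹ := by
  have h : 0 < 1 - r := by linarith
  have hs := geom_sum_mul (x := r) n
  have heq : (∑ i ∈ range n, r ^ i) * (1 - r) = 1 - r ^ n := by nlinarith [hs]
  have hle : (∑ i ∈ range n, r ^ i) * (1 - r) ≤ 1 := by
    rw [heq]; have := pow_nonneg h0 n; linarith
  calc (∑ i ∈ range n, r ^ i) = (∑ i ∈ range n, r ^ i) * (1 - r) * (1 - r)⁻¹ := by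
        field_simp
    _ ≤ 1 * (1 - r)⁻¹ := mul_le_mul_of_nonneg_right hle (by positivity)
    _ = (1 - r)⁻¹ := one_mul _

lemma basel (N : ℕ) : ∑ t ∈ range N, (1:ℝ)/((t:ℝ)+1)^2 ≤ 2 := by
  have key : ∀ N : ℕ, ∑ t ∈ range (N+1), (1:ℝ)/((t:ℝ)+1)^2 ≤ 2 - 1/((N:ℝ)+1) := by
    intro N
    induction N with
    | zero => simp; norm_num
    | succ N ih =>
      rw [Finset.sum_range_succ]
      have h1 : (0:ℝ) < (N:ℝ) + 1 := by positivity
      have h2 : (0:ℝ) < (N:ℝ) + 2 := by positivity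
      have hstep : (1:ℝ)/(((N+1:ℕ):ℝ)+1)^2 ≤ 1/((N:ℝ)+1) - 1/((N:ℝ)+2) := by
        push_cast
        rw [div_sub_div _ _ (ne_of_gt h1) (ne_of_gt h2), div_le_div_iff₀ (by positivity) (by positivity)]
        nlinarith
      push_cast at hstep ⊢
      have e : ((N:ℝ)+1+1) = (N:ℝ)+2 := by ring
      rw [e] at hstep ⊢
      linarith
  cases N with
  | zero => simp
  | succ N =>
    have := key N
    have h3 : (0:ℝ) < 1/((N:ℝ)+1) := by positivity
    push_cast at *
    linarith

lemma drop_lemma (k m : ℕ) (S : Finset (Fin k → ℕ)) (hS : S ⊆ Finset.Nat.antidiagonalTuple k m)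
    (jx : Fin k) (g : Fin k → ℕ → ℝ) (hg : ∀ j t, 0 ≤ g j t) :
    ∑ ns ∈ S, ∏ j ∈ univ.erase jx, g j (ns j) ≤ ∏ j ∈ univ.erase jx, ∑ t ∈ range (m+1), g j t := by
  classical
  set g' : Fin k → ℕ → ℝ := fun j t => if j = jx then (if t = 0 then 1 else 0) else g j t with hg'
  have hg'0 : ∀ j t, 0 ≤ g' j t := by
    intro j t; dsimp [g']
    split
    · split <;> norm_num
    · exact hg j t
  have hmem : ∀ ns ∈ S, ∀ j, ns j ≤ m := by
    intro ns hns j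
    have h := (Finset.Nat.mem_antidiagonalTuple.mp (hS hns))
    calc ns j ≤ ∑ i, ns i := Finset.single_le_sum (fun i _ => Nat.zero_le _) (mem_univ j)
    _ = m := h
  have key1 : ∀ ns ∈ S, ∏ j ∈ univ.erase jx, g j (ns j) = ∏ j, g' j (Function.update ns jx 0 j) := by
    intro ns hns
    rw [← Finset.mul_prod_erase univ _ (mem_univ jx)]
    have h1 : g' jx (Function.update ns jx 0 jx) = 1 := by simp [g']
    rw [h1, one_mul]
    apply Finset.prod_congr rfl
    intro j hj
    have hjne : j ≠ jx := (Finset.mem_erase.mp hj).1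
    simp [g', hjne, Function.update_of_ne hjne]
  have hinj : ∀ x ∈ S, ∀ y ∈ S, Function.update x jx 0 = Function.update y jx 0 → x = y := by
    intro x hx y hy h
    funext j
    by_cases hj : j = jx
    · subst hj
      have hx' := Finset.Nat.mem_antidiagonalTuple.mp (hS hx)
      have hy' := Finset.Nat.mem_antidiagonalTuple.mp (hS hy)
      rw [← Finset.add_sum_erase _ x (mem_univ j)] at hx'
      rw [← Finset.add_sum_erase _ y (mem_univ j)] at hy'
      have heq : ∑ i ∈ univ.erase j, x i = ∑ i ∈ univ.erase j, y i := by
        apply Finset.sum_congr rfl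
        intro i hi
        have hine : i ≠ j := (Finset.mem_erase.mp hi).1
        have := congrFun h i
        rwa [Function.update_of_ne hine, Function.update_of_ne hine] at this
      omega
    · have := congrFun h j
      rwa [Function.update_of_ne hj, Function.update_of_ne hj] at this
  calc ∑ ns ∈ S, ∏ j ∈ univ.erase jx, g j (ns j)
      = ∑ ns ∈ S, ∏ j, g' j (Function.update ns jx 0 j) := Finset.sum_congr rfl key1
    _ = ∑ p ∈ S.image (fun ns => Function.update ns jx 0), ∏ j, g' j (p j) := (Finset.sum_image (f := fun p => ∏ j, g' j (p j)) hinj).symm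
    _ ≤ ∑ p ∈ Fintype.piFinset (fun _ : Fin k => range (m+1)), ∏ j, g' j (p j) := by
        apply Finset.sum_le_sum_of_subset_of_nonneg
        · intro p hp
          rcases Finset.mem_image.mp hp with ⟨ns, hns, rfl⟩
          rw [Fintype.mem_piFinset]
          intro j
          rw [Finset.mem_range]
          by_cases hj : j = jx
          · subst hj; rw [Function.update_self]; omega
          · rw [Function.update_of_ne hj]; exact Nat.lt_succ_of_le (hmem ns hns j)
        · intro p _ _; exact Finset.prod_nonneg fun j _ => hg'0 j (p j)
    _ = ∏ j, ∑ t ∈ range (m+1), g' j t := (Finset.prod_univ_sum _ _).symm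
    _ = ∏ j ∈ univ.erase jx, ∑ t ∈ range (m+1), g j t := by
        rw [← Finset.mul_prod_erase univ _ (mem_univ jx)]
        have h2 : ∑ t ∈ range (m+1), g' jx t = 1 := by
          simp [g', Finset.sum_ite_eq']
        rw [h2, one_mul]
        apply Finset.prod_congr rfl
        intro j hj
        apply Finset.sum_congr rfl
        intro tt _
        simp [g', (Finset.mem_erase.mp hj).1]

lemma tuple_w_sum (k m : ℕ) (hk : 1 ≤ k) :
    ∑ ns ∈ Finset.Nat.antidiagonalTuple k m, ∏ j, (1:ℝ)/((ns j:ℝ)+1)^2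
      ≤ (k:ℝ)^3 * 2^k * (1/((m:ℝ)+1)^2) := by
  classical
  have hne : Nonempty (Fin k) := ⟨⟨0, hk⟩⟩
  set w : ℕ → ℝ := fun s => (1:ℝ)/((s:ℝ)+1)^2 with hw
  have hw0 : ∀ s, 0 ≤ w s := fun s => by positivity
  set jm : (Fin k → ℕ) → Fin k := fun ns => Classical.choose (Finite.exists_max ns) with hjm
  have hjmax : ∀ ns : Fin k → ℕ, ∀ j, ns j ≤ ns (jm ns) :=
    fun ns => Classical.choose_spec (Finite.exists_max ns)
  rw [← Finset.sum_fiberwise (Finset.Nat.antidiagonalTuple k m) jm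
    (fun ns => ∏ j, w (ns j))]
  have hfiber : ∀ jx : Fin k,
      ∑ ns ∈ (Finset.Nat.antidiagonalTuple k m).filter (fun ns => jm ns = jx), ∏ j, w (ns j)
        ≤ (k:ℝ)^2 * w m * 2^(k-1) := by
    intro jx
    have hstep : ∀ ns ∈ (Finset.Nat.antidiagonalTuple k m).filter (fun ns => jm ns = jx),
        ∏ j, w (ns j) ≤ ((k:ℝ)^2 * w m) * ∏ j ∈ univ.erase jx, w (ns j) := by
      intro ns hns
      rcases Finset.mem_filter.mp hns with ⟨hmem, hjx⟩
      have hsum := Finset.Nat.mem_antidiagonalTuple.mp hmem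
      have hmax : m ≤ k * ns jx := by
        subst hjx
        calc m = ∑ j, ns j := hsum.symm
        _ ≤ ∑ _j : Fin k, ns (jm ns) := Finset.sum_le_sum (fun j _ => hjmax ns j)
        _ = k * ns (jm ns) := by rw [Finset.sum_const, card_univ, Fintype.card_fin, smul_eq_mul]
      have hwle : w (ns jx) ≤ (k:ℝ)^2 * w m := by
        have hc : ((m:ℝ)+1) ≤ (k:ℝ) * ((ns jx:ℝ)+1) := by
          have : (m:ℝ) ≤ (k:ℝ) * (ns jx:ℝ) := by exact_mod_cast hmax
          have hk1 : (1:ℝ) ≤ (k:ℝ) := by exact_mod_cast hk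
          nlinarith
        have hx0 : (0:ℝ) ≤ (ns jx : ℝ) := Nat.cast_nonneg _
        rw [hw]
        dsimp only
        rw [mul_one_div, div_le_div_iff₀ (by positivity) (by positivity)]
        nlinarith
      calc ∏ j, w (ns j) = w (ns jx) * ∏ j ∈ univ.erase jx, w (ns j) :=
            (Finset.mul_prod_erase univ _ (mem_univ jx)).symm
      _ ≤ ((k:ℝ)^2 * w m) * ∏ j ∈ univ.erase jx, w (ns j) := by
            apply mul_le_mul_of_nonneg_right hwle
            exact Finset.prod_nonneg fun j _ => hw0 _
    calc ∑ ns ∈ (Finset.Nat.antidiagonalTuple k m).filter (fun ns => jm ns = jx), ∏ j, w (ns j)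
        ≤ ∑ ns ∈ (Finset.Nat.antidiagonalTuple k m).filter (fun ns => jm ns = jx),
            ((k:ℝ)^2 * w m) * ∏ j ∈ univ.erase jx, w (ns j) := Finset.sum_le_sum hstep
      _ = ((k:ℝ)^2 * w m) * ∑ ns ∈ (Finset.Nat.antidiagonalTuple k m).filter (fun ns => jm ns = jx),
            ∏ j ∈ univ.erase jx, w (ns j) := by rw [Finset.mul_sum]
      _ ≤ ((k:ℝ)^2 * w m) * ∏ j ∈ univ.erase jx, ∑ t ∈ range (m+1), w t := by
            apply mul_le_mul_of_nonneg_left _ (by positivity)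
            exact drop_lemma k m _ (Finset.filter_subset _ _) jx (fun _ s => w s) (fun _ s => hw0 s)
      _ ≤ ((k:ℝ)^2 * w m) * 2^(k-1) := by
            apply mul_le_mul_of_nonneg_left _ (by positivity)
            calc ∏ j ∈ univ.erase jx, ∑ t ∈ range (m+1), w t
                ≤ ∏ _j ∈ univ.erase jx, (2:ℝ) := by
                  apply Finset.prod_le_prod
                  · intro j _; exact Finset.sum_nonneg fun s _ => hw0 s
                  · intro j _; exact basel (m+1)
              _ = 2^(k-1) := by
                  rw [Finset.prod_const, Finset.card_erase_of_mem (mem_univ jx), card_univ,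
                    Fintype.card_fin]
      _ = (k:ℝ)^2 * w m * 2^(k-1) := by ring
  calc ∑ jx : Fin k, ∑ ns ∈ (Finset.Nat.antidiagonalTuple k m).filter (fun ns => jm ns = jx),
        ∏ j, w (ns j)
      ≤ ∑ _jx : Fin k, (k:ℝ)^2 * w m * 2^(k-1) := Finset.sum_le_sum fun jx _ => hfiber jx
    _ = (k:ℝ) * ((k:ℝ)^2 * w m * 2^(k-1)) := by
        rw [Finset.sum_const, card_univ, Fintype.card_fin, nsmul_eq_mul]
    _ = ((k:ℝ)^3 * w m) * 2^(k-1) := by ring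
    _ ≤ ((k:ℝ)^3 * w m) * 2^k := by
        have h1 : (2:ℝ)^(k-1) ≤ 2^k := pow_le_pow_right₀ (by norm_num) (Nat.sub_le k 1)
        exact mul_le_mul_of_nonneg_left h1
          (mul_nonneg (pow_nonneg (Nat.cast_nonneg k) 3) (hw0 m))
    _ = (k:ℝ)^3 * 2^k * w m := by ring

lemma choose2 (n : ℕ) : 2 * Nat.choose n 2 = n * (n - 1) := by
  induction n with
  | zero => simp
  | succ n ih =>
    rw [Nat.choose_succ_succ, Nat.choose_one_right, Nat.mul_add, ih, Nat.succ_sub_one]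
    cases n with
    | zero => simp
    | succ m => simp only [Nat.succ_sub_one]; ring

lemma trivial_mem (i n' : ℕ) :
    Fin.cons n' (0 : Fin i → ℕ) ∈ Finset.Nat.antidiagonalTuple (i+1) n' := by
  rw [Finset.Nat.mem_antidiagonalTuple, Fin.sum_cons]
  simp

lemma Ldeg_trivial (i n' : ℕ) : Ldeg (i+1) (Fin.cons n' (0 : Fin i → ℕ)) = 0 := by
  unfold Ldeg
  rw [Fin.sum_cons, Fin.sum_univ_succ, Fin.sum_univ_succ]
  simp

lemma fact3 (k n' : ℕ) (ns : Fin (k+1) → ℕ) (hsum : ∑ j, ns j = n') (jx : Fin (k+1))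
    (hmax : ∀ j, ns j ≤ ns jx) (hne : ns ≠ Fin.cons n' (0 : Fin k → ℕ)) :
    2*n'*(n' - ns jx) + n' + 4*(∑ j : Fin (k+1), (j:ℕ) * ns j) ≤ 8 * Ldeg (k+1) ns := by
  classical
  set J := ∑ j : Fin (k+1), (j:ℕ) * ns j with hJdef
  set sq := ∑ j : Fin (k+1), ns j * ns j with hsqdef
  set c2 := Nat.choose n' 2 with hc2def
  set sC := ∑ j : Fin (k+1), Nat.choose (ns j) 2 with hsCdef
  have hmle : ns jx ≤ n' := by
    rw [← hsum]; exact Finset.single_le_sum (fun i _ => Nat.zero_le _) (mem_univ jx)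
  have h2c2 : 2 * c2 + n' = n' * n' := by
    rw [hc2def, choose2]
    cases n' with
    | zero => simp
    | succ m => rw [Nat.succ_sub_one, Nat.mul_succ]; try omega
  have hsC : 2 * sC + n' = sq := by
    rw [hsCdef, hsqdef, Finset.mul_sum, ← hsum, ← Finset.sum_add_distrib]
    apply Finset.sum_congr rfl
    intro j _
    have h := choose2 (ns j)
    cases hnsj : ns j with
    | zero => simp
    | succ m =>
      rw [hnsj, Nat.succ_sub_one] at h
      rw [h, Nat.mul_succ]
      try omega
  have hsqle : sq ≤ ns jx * n' := by
    rw [hsqdef, ← hsum, Finset.mul_sum]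
    exact Finset.sum_le_sum fun j _ => Nat.mul_le_mul_right _ (hmax j)
  have hble : ns jx * n' ≤ n' * n' := Nat.mul_le_mul_right _ hmle
  have hsCle : sC ≤ c2 := by omega
  have hL : Ldeg (k+1) ns + sC = c2 + J := by
    have h : Ldeg (k+1) ns = c2 + J - sC := by
      unfold Ldeg
      rw [hsum]
      try simp only [← hJdef, ← hsCdef, ← hc2def]
    omega
  by_cases hc : ns jx = n'
  · by_cases hz : (jx : ℕ) = 0
    · exfalso
      apply hne
      have hjx0 : jx = 0 := Fin.ext (by simpa using hz)
      rw [hjx0] at hc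
      have hrest : ∑ j : Fin k, ns j.succ = 0 := by
        rw [Fin.sum_univ_succ] at hsum
        omega
      funext j
      refine Fin.cases ?_ ?_ j
      · rw [Fin.cons_zero]; exact hc
      · intro j'
        rw [Fin.cons_succ]
        have := Finset.sum_eq_zero_iff.mp hrest j' (mem_univ j')
        simpa using this
    · have hJge : n' ≤ J := by
        have h1 : (jx:ℕ) * ns jx ≤ J := by
          rw [hJdef]
          exact Finset.single_le_sum (f := fun j : Fin (k+1) => (j:ℕ) * ns j) (fun i _ => Nat.zero_le _) (mem_univ jx)
        have h2 : 1 * n' ≤ (jx:ℕ) * ns jx := by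
          rw [hc]; exact Nat.mul_le_mul_right _ (by omega)
        omega
      rw [hc]
      simp only [Nat.sub_self, Nat.mul_zero]
      omega
  · have hgoal : 2*n'*(n' - ns jx) = 2*(n'*(n' - ns jx)) := by ring
    rw [hgoal]
    have hs'eq : n' * (n' - ns jx) + ns jx * n' = n' * n' := by
      rw [Nat.mul_comm (ns jx) n', ← Nat.mul_add, Nat.sub_add_cancel hmle]
    have hs'ge : n' ≤ n' * (n' - ns jx) := Nat.le_mul_of_pos_right _ (by omega)
    omega

lemma eval_rec {φ : ℕ → ℝ} {t : ℕ → Polynomial ℝ} (ht : IsTSeq φ t) (x : ℝ) {n : ℕ} (hn : 1 ≤ n) :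
    (t n).eval x = ∑ i ∈ Finset.Icc 1 n, φ i *
      ∑ ns ∈ Finset.Nat.antidiagonalTuple (i + 1) (n - i),
        (∏ j, (t (ns j)).eval x) * x ^ Ldeg (i + 1) ns := by
  conv_lhs => rw [ht.2 n hn]
  rw [Polynomial.eval_finset_sum]
  apply Finset.sum_congr rfl
  intro i _
  rw [Polynomial.eval_mul, Polynomial.eval_C, Polynomial.eval_finset_sum]
  congr 1
  apply Finset.sum_congr rfl
  intro ns _
  rw [Polynomial.eval_mul, Polynomial.eval_pow, Polynomial.eval_X, Polynomial.eval_prod]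

lemma tau_nonneg_mono {φ : ℕ → ℝ} {t : ℕ → Polynomial ℝ} (ht : IsTSeq φ t)
    (hnonneg : ∀ n, 1 ≤ n → 0 ≤ φ n) :
    ∀ n, ∀ x y : ℝ, 0 ≤ x → x ≤ y →
      0 ≤ (t n).eval x ∧ (t n).eval x ≤ (t n).eval y := by
  intro n
  induction n using Nat.strong_induction_on with
  | _ n IH =>
    intro x y hx hxy
    rcases Nat.eq_zero_or_pos n with hn | hn
    · subst hn; rw [ht.1]; simp
    · have hy : 0 ≤ y := le_trans hx hxy
      rw [eval_rec ht x hn, eval_rec ht y hn]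
      have hlt : ∀ i ∈ Finset.Icc 1 n, ∀ ns ∈ Finset.Nat.antidiagonalTuple (i+1) (n-i),
          ∀ j : Fin (i+1), ns j < n := by
        intro i hi ns hns j
        rcases Finset.mem_Icc.mp hi with ⟨hi1, hi2⟩
        have hsum := Finset.Nat.mem_antidiagonalTuple.mp hns
        have : ns j ≤ n - i :=
          hsum ▸ Finset.single_le_sum (fun l _ => Nat.zero_le _) (mem_univ j)
        omega
      constructor
      · apply Finset.sum_nonneg
        intro i hi
        apply mul_nonneg (hnonneg i (Finset.mem_Icc.mp hi).1)
        apply Finset.sum_nonneg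
        intro ns hns
        apply mul_nonneg _ (pow_nonneg hx _)
        exact Finset.prod_nonneg fun j _ =>
          (IH (ns j) (hlt i hi ns hns j) x y hx hxy).1
      · apply Finset.sum_le_sum
        intro i hi
        apply mul_le_mul_of_nonneg_left _ (hnonneg i (Finset.mem_Icc.mp hi).1)
        apply Finset.sum_le_sum
        intro ns hns
        apply mul_le_mul
        · apply Finset.prod_le_prod
          · intro j _; exact (IH (ns j) (hlt i hi ns hns j) x y hx hxy).1
          · intro j _; exact (IH (ns j) (hlt i hi ns hns j) x y hx hxy).2
        · exact pow_le_pow_left₀ hx hxy _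
        · exact pow_nonneg hx _
        · exact Finset.prod_nonneg fun j _ =>
            le_trans (IH (ns j) (hlt i hi ns hns j) x y hx hxy).1
              (IH (ns j) (hlt i hi ns hns j) x y hx hxy).2

lemma lemA_s17 {φ : ℕ → ℝ} {t : ℕ → Polynomial ℝ} (ht : IsTSeq φ t)
    (hnonneg : ∀ n, 1 ≤ n → 0 ≤ φ n) (S : ℝ)
    (hS : ∀ N, ∑ i ∈ Finset.Icc 1 N, φ i * (64:ℝ)^i ≤ S) :
    ∀ n, (t n).eval 1 ≤ (max 1 (2*S))^n * (1/((n:ℝ)+1)^2) := by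
  set A := max 1 (2*S) with hAdef
  have hA1 : (1:ℝ) ≤ A := le_max_left _ _
  have hA0 : (0:ℝ) ≤ A := by linarith
  have h2S : 2*S ≤ A := le_max_right _ _
  intro n
  induction n using Nat.strong_induction_on with
  | _ n IH =>
  rcases Nat.eq_zero_or_pos n with hn | hn
  · subst hn; rw [ht.1]; simp
  have hw0 : ∀ m : ℕ, (0:ℝ) ≤ 1/((m:ℝ)+1)^2 := fun m => by positivity
  have hwn0 : (0:ℝ) ≤ 1/((n:ℝ)+1)^2 := hw0 n
  rw [eval_rec ht 1 hn]
  have hper : ∀ i ∈ Finset.Icc 1 n,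
      φ i * (∑ ns ∈ Finset.Nat.antidiagonalTuple (i+1) (n-i),
        (∏ j, (t (ns j)).eval 1) * (1:ℝ) ^ Ldeg (i+1) ns)
      ≤ φ i * (64:ℝ)^i * (2 * A^(n-1) * (1/((n:ℝ)+1)^2)) := by
    intro i hi
    rcases Finset.mem_Icc.mp hi with ⟨hi1, hi2⟩
    have hφi := hnonneg i hi1
    have hinner : (∑ ns ∈ Finset.Nat.antidiagonalTuple (i+1) (n-i),
        (∏ j, (t (ns j)).eval 1) * (1:ℝ) ^ Ldeg (i+1) ns)
        ≤ A^(n-i) * (((i:ℝ)+1)^3 * 2^(i+1) * (1/(((n-i:ℕ):ℝ)+1)^2)) := by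
      have hstep : ∀ ns ∈ Finset.Nat.antidiagonalTuple (i+1) (n-i),
          (∏ j, (t (ns j)).eval 1) * (1:ℝ) ^ Ldeg (i+1) ns
            ≤ A^(n-i) * ∏ j, (1:ℝ)/((ns j:ℝ)+1)^2 := by
        intro ns hns
        have hsum := Finset.Nat.mem_antidiagonalTuple.mp hns
        have hlt : ∀ j : Fin (i+1), ns j < n := by
          intro j
          have : ns j ≤ n - i :=
            hsum ▸ Finset.single_le_sum (fun l _ => Nat.zero_le _) (mem_univ j)
          omega
        rw [one_pow, mul_one]
        calc (∏ j, (t (ns j)).eval 1)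
            ≤ ∏ j, (A^(ns j) * (1/((ns j:ℝ)+1)^2)) := by
              apply Finset.prod_le_prod
              · intro j _
                exact (tau_nonneg_mono ht hnonneg (ns j) 1 1 (by norm_num) le_rfl).1
              · intro j _; exact IH (ns j) (hlt j)
          _ = (∏ j, A^(ns j)) * ∏ j, (1:ℝ)/((ns j:ℝ)+1)^2 := Finset.prod_mul_distrib
          _ = A^(n-i) * ∏ j, (1:ℝ)/((ns j:ℝ)+1)^2 := by
              rw [Finset.prod_pow_eq_pow_sum, hsum]
      calc (∑ ns ∈ Finset.Nat.antidiagonalTuple (i+1) (n-i),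
          (∏ j, (t (ns j)).eval 1) * (1:ℝ) ^ Ldeg (i+1) ns)
          ≤ ∑ ns ∈ Finset.Nat.antidiagonalTuple (i+1) (n-i),
            A^(n-i) * ∏ j, (1:ℝ)/((ns j:ℝ)+1)^2 := Finset.sum_le_sum hstep
        _ = A^(n-i) * ∑ ns ∈ Finset.Nat.antidiagonalTuple (i+1) (n-i),
            ∏ j, (1:ℝ)/((ns j:ℝ)+1)^2 := by rw [Finset.mul_sum]
        _ ≤ A^(n-i) * (((i:ℝ)+1)^3 * 2^(i+1) * (1/(((n-i:ℕ):ℝ)+1)^2)) := by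
            apply mul_le_mul_of_nonneg_left _ (pow_nonneg hA0 _)
            have := tuple_w_sum (i+1) (n-i) (by omega)
            push_cast at this ⊢
            exact this
    have hub : A^(n-i) * (((i:ℝ)+1)^3 * 2^(i+1) * (1/(((n-i:ℕ):ℝ)+1)^2))
        ≤ (64:ℝ)^i * (2 * A^(n-1) * (1/((n:ℝ)+1)^2)) := by
      have hApow : A^(n-i) ≤ A^(n-1) := pow_le_pow_right₀ hA1 (by omega)
      have hwbound : (1/(((n-i:ℕ):ℝ)+1)^2) ≤ ((i:ℝ)+1)^2 * (1/((n:ℝ)+1)^2) := by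
        have hnat : (n+1) ≤ (i+1)*((n-i)+1) := by
          have : i*(n-i) + i + (n-i) + 1 = (i+1)*((n-i)+1) := by ring
          omega
        have hcast : ((n:ℝ)+1) ≤ ((i:ℝ)+1)*(((n-i:ℕ):ℝ)+1) := by
          exact_mod_cast hnat
        rw [mul_one_div, div_le_div_iff₀ (by positivity) (by positivity)]
        have h1 : (0:ℝ) ≤ (n:ℝ)+1 := by positivity
        nlinarith
      have hpbound : ((i:ℝ)+1)^5 * 2^(i+1) ≤ 2*(64:ℝ)^i := by
        have hnat : (i+1)^5 * 2^(i+1) ≤ 2*64^i := by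
          have h1 : i+1 ≤ 2^i := Nat.lt_two_pow_self
          have h2 : (i+1)^5 ≤ (2^i)^5 := Nat.pow_le_pow_left h1 5
          calc (i+1)^5 * 2^(i+1) ≤ (2^i)^5 * 2^(i+1) := Nat.mul_le_mul_right _ h2
            _ = 2*64^i := by rw [← Nat.pow_mul, Nat.pow_succ]; ring_nf; rw [show (64:ℕ) = 2^6 by norm_num, ← Nat.pow_mul]; ring_nf
        exact_mod_cast hnat
      calc A^(n-i) * (((i:ℝ)+1)^3 * 2^(i+1) * (1/(((n-i:ℕ):ℝ)+1)^2))
          ≤ A^(n-i) * (((i:ℝ)+1)^3 * 2^(i+1) * (((i:ℝ)+1)^2 * (1/((n:ℝ)+1)^2))) := by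
            apply mul_le_mul_of_nonneg_left _ (pow_nonneg hA0 _)
            apply mul_le_mul_of_nonneg_left hwbound (by positivity)
        _ = (((i:ℝ)+1)^5 * 2^(i+1)) * (A^(n-i) * (1/((n:ℝ)+1)^2)) := by ring
        _ ≤ (2*(64:ℝ)^i) * (A^(n-1) * (1/((n:ℝ)+1)^2)) := by
            apply mul_le_mul hpbound _ (by positivity) (by positivity)
            exact mul_le_mul_of_nonneg_right hApow hwn0
        _ = (64:ℝ)^i * (2 * A^(n-1) * (1/((n:ℝ)+1)^2)) := by ring
    calc φ i * (∑ ns ∈ Finset.Nat.antidiagonalTuple (i+1) (n-i),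
          (∏ j, (t (ns j)).eval 1) * (1:ℝ) ^ Ldeg (i+1) ns)
        ≤ φ i * (A^(n-i) * (((i:ℝ)+1)^3 * 2^(i+1) * (1/(((n-i:ℕ):ℝ)+1)^2))) :=
          mul_le_mul_of_nonneg_left hinner hφi
      _ ≤ φ i * ((64:ℝ)^i * (2 * A^(n-1) * (1/((n:ℝ)+1)^2))) :=
          mul_le_mul_of_nonneg_left hub hφi
      _ = φ i * (64:ℝ)^i * (2 * A^(n-1) * (1/((n:ℝ)+1)^2)) := by ring
  calc (∑ i ∈ Finset.Icc 1 n, φ i *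
        ∑ ns ∈ Finset.Nat.antidiagonalTuple (i+1) (n-i),
          (∏ j, (t (ns j)).eval 1) * (1:ℝ) ^ Ldeg (i+1) ns)
      ≤ ∑ i ∈ Finset.Icc 1 n, φ i * (64:ℝ)^i * (2 * A^(n-1) * (1/((n:ℝ)+1)^2)) :=
        Finset.sum_le_sum hper
    _ = (∑ i ∈ Finset.Icc 1 n, φ i * (64:ℝ)^i) * (2 * A^(n-1) * (1/((n:ℝ)+1)^2)) := by
        rw [← Finset.sum_mul]
    _ ≤ S * (2 * A^(n-1) * (1/((n:ℝ)+1)^2)) := by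
        apply mul_le_mul_of_nonneg_right (hS n) (by positivity)
    _ = (2*S) * (A^(n-1) * (1/((n:ℝ)+1)^2)) := by ring
    _ ≤ A * (A^(n-1) * (1/((n:ℝ)+1)^2)) := by
        apply mul_le_mul_of_nonneg_right h2S (by positivity)
    _ = A^n * (1/((n:ℝ)+1)^2) := by
        rw [← mul_assoc, ← pow_succ']
        congr 2
        omega

lemma lem_geo {φ : ℕ → ℝ}
    (hdecay : ∃ c : ℝ, c < -2 ∧
      ∀ᶠ n : ℕ in atTop, φ n ≤ Real.exp (c * (n : ℝ) * Real.log (n : ℝ)))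
    (R β : ℝ) (hR : 1 ≤ R) (hβ : 0 < β) :
    ∀ᶠ i : ℕ in atTop, φ i * R ^ i ≤ β ^ i := by
  obtain ⟨c, hc, hev⟩ := hdecay
  have hcneg : c < 0 := by linarith
  have hR0 : (0:ℝ) < R := by linarith
  have hlog : ∀ᶠ i : ℕ in atTop, (Real.log β - Real.log R) / c ≤ Real.log i := by
    have h : Tendsto (fun i : ℕ => Real.log i) atTop atTop :=
      Real.tendsto_log_atTop.comp tendsto_natCast_atTop_atTop
    exact h.eventually_ge_atTop _
  filter_upwards [hev, hlog, eventually_ge_atTop 1] with i h1 h2 h3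
  have hi0 : (0:ℝ) ≤ (i:ℝ) := Nat.cast_nonneg i
  have hkey : Real.exp (c * (i:ℝ) * Real.log i) * R ^ i ≤ β ^ i := by
    have hR' : R ^ i = Real.exp ((i:ℝ) * Real.log R) := by
      rw [Real.exp_nat_mul, Real.exp_log hR0]
    have hβ' : β ^ i = Real.exp ((i:ℝ) * Real.log β) := by
      rw [Real.exp_nat_mul, Real.exp_log hβ]
    rw [hR', hβ', ← Real.exp_add, Real.exp_le_exp]
    have h4 : c * Real.log i ≤ Real.log β - Real.log R := by
      have h5 := mul_le_mul_of_nonpos_left h2 (le_of_lt hcneg)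
      rwa [mul_div_cancel₀ _ (ne_of_lt hcneg)] at h5
    nlinarith [mul_le_mul_of_nonneg_left h4 hi0]
  calc φ i * R ^ i ≤ Real.exp (c * (i:ℝ) * Real.log i) * R ^ i :=
        mul_le_mul_of_nonneg_right h1 (pow_nonneg (le_of_lt hR0) i)
    _ ≤ β ^ i := hkey

lemma summable_helper {f : ℕ → ℝ} (hf0 : ∀ i, 0 ≤ f i)
    (hev : ∀ᶠ i in atTop, f i ≤ (1/2:ℝ)^i) : Summable f := by
  obtain ⟨N, hN⟩ := eventually_atTop.mp hev
  rw [← summable_nat_add_iff N]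
  apply Summable.of_nonneg_of_le (fun i => hf0 _) (fun i => hN (i+N) (by omega))
  have h : Summable (fun i : ℕ => (1/2:ℝ)^i * (1/2)^N) :=
    (summable_geometric_of_lt_one (by norm_num) (by norm_num)).mul_right _
  simpa [pow_add] using h

lemma inner_bound {φ : ℕ → ℝ} {t : ℕ → Polynomial ℝ} (ht : IsTSeq φ t)
    (hnonneg : ∀ n, 1 ≤ n → 0 ≤ φ n)
    (q u A Mb : ℝ) (N0 : ℕ)
    (hq0 : 0 ≤ q) (hq1 : q ≤ 1) (hu0 : 0 ≤ u) (hu1 : u < 1) (hu8 : u^(8:ℕ) = q)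
    (hA1 : 1 ≤ A) (hσA : ∀ m, (t m).eval 1 ≤ A^m)
    (hN0 : u^N0 * A ≤ 1) (hMb0 : 0 ≤ Mb)
    (n i : ℕ) (hi1 : 1 ≤ i) (hin : i ≤ n)
    (hMb : ∀ k, k ≤ n - 1 → (t k).eval q ≤ Mb) :
    ∑ ns ∈ (Finset.Nat.antidiagonalTuple (i+1) (n-i)).erase (Fin.cons (n-i) (0 : Fin i → ℕ)),
        (∏ j, (t (ns j)).eval q) * q ^ Ldeg (i+1) ns
      ≤ Mb * A^N0 * ((1-u^4)⁻¹^i * u^(n-i)) := by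
  classical
  set n' := n - i with hn'
  set v : ℝ := u^4 with hvdef
  have hA0 : (0:ℝ) ≤ A := by linarith
  have hv0 : (0:ℝ) ≤ v := by positivity
  have hv1 : v < 1 := by
    rw [hvdef]
    calc u^4 ≤ u^1 := pow_le_pow_of_le_one hu0 hu1.le (by omega)
      _ = u := pow_one u
      _ < 1 := hu1
  have hCA1 : (1:ℝ) ≤ A^N0 := one_le_pow₀ hA1
  have hτ0 : ∀ m, 0 ≤ (t m).eval q := fun m =>
    (tau_nonneg_mono ht hnonneg m q q hq0 le_rfl).1
  have hτA : ∀ m, (t m).eval q ≤ A^m := fun m =>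
    le_trans (tau_nonneg_mono ht hnonneg m q 1 hq0 hq1).2 (hσA m)
  -- per-tuple bound
  have hstep : ∀ ns ∈ (Finset.Nat.antidiagonalTuple (i+1) n').erase (Fin.cons n' (0 : Fin i → ℕ)),
      (∏ j, (t (ns j)).eval q) * q ^ Ldeg (i+1) ns
        ≤ (Mb * A^N0 * u^n') * ∏ j ∈ univ.erase (0 : Fin (i+1)), ((v^((j:ℕ)))^(ns j)) := by
    intro ns hns
    have hmem : ns ∈ Finset.Nat.antidiagonalTuple (i+1) n' := Finset.mem_of_mem_erase hns
    have hne : ns ≠ Fin.cons n' (0 : Fin i → ℕ) := Finset.ne_of_mem_erase hns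
    have hsum : ∑ j, ns j = n' := Finset.Nat.mem_antidiagonalTuple.mp hmem
    obtain ⟨jx, hjx⟩ := Finite.exists_max ns
    have hnsjx : ns jx ≤ n' := by
      rw [← hsum]; exact Finset.single_le_sum (fun l _ => Nat.zero_le _) (mem_univ jx)
    set s := n' - ns jx with hsdef
    set J := ∑ j : Fin (i+1), (j:ℕ) * ns j with hJdef
    -- h1 : product of taus
    have herase : ∑ j ∈ univ.erase jx, ns j = s := by
      have h := Finset.add_sum_erase univ ns (mem_univ jx)
      rw [hsum] at h
      omega
    have h1 : (∏ j, (t (ns j)).eval q) ≤ Mb * A^s := by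
      rw [← Finset.mul_prod_erase univ _ (mem_univ jx)]
      have ha : (t (ns jx)).eval q ≤ Mb := hMb _ (by omega)
      have hb : ∏ j ∈ univ.erase jx, (t (ns j)).eval q ≤ A^s := by
        calc ∏ j ∈ univ.erase jx, (t (ns j)).eval q
            ≤ ∏ j ∈ univ.erase jx, A^(ns j) :=
              Finset.prod_le_prod (fun j _ => hτ0 _) (fun j _ => hτA _)
          _ = A^s := by rw [Finset.prod_pow_eq_pow_sum, herase]
      exact mul_le_mul ha hb (Finset.prod_nonneg fun j _ => hτ0 _) hMb0
    -- exponent inequality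
    have hexp : q ^ Ldeg (i+1) ns ≤ u^(2*n'*s + n' + 4*J) := by
      rw [← hu8, ← pow_mul]
      exact pow_le_pow_of_le_one hu0 hu1.le (fact3 i n' ns hsum jx hjx hne)
    have hq0' : (0:ℝ) ≤ q ^ Ldeg (i+1) ns := pow_nonneg hq0 _
    -- killer
    have h5 : A^s * u^(2*n'*s) ≤ A^N0 := by
      have hAS : A^s * u^(2*n'*s) = (A*u^(2*n'))^s := by
        rw [mul_pow, pow_mul]
      rw [hAS]
      by_cases hcase : N0 ≤ n'
      · have h6 : A*u^(2*n') ≤ 1 := by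
          calc A*u^(2*n') ≤ A*u^N0 :=
                mul_le_mul_of_nonneg_left (pow_le_pow_of_le_one hu0 hu1.le (by omega)) hA0
            _ = u^N0*A := mul_comm _ _
            _ ≤ 1 := hN0
        calc (A*u^(2*n'))^s ≤ 1 := pow_le_one₀ (by positivity) h6
          _ ≤ A^N0 := hCA1
      · have hsN0 : s ≤ N0 := by omega
        calc (A*u^(2*n'))^s ≤ A^s := by
              apply pow_le_pow_left₀ (by positivity)
              calc A*u^(2*n') ≤ A*1 :=
                    mul_le_mul_of_nonneg_left (pow_le_one₀ hu0 hu1.le) hA0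
                _ = A := mul_one A
          _ ≤ A^N0 := pow_le_pow_right₀ hA1 hsN0
    -- J-product identity
    have hJeq : u^(4*J) = ∏ j ∈ univ.erase (0 : Fin (i+1)), ((v^((j:ℕ)))^(ns j)) := by
      have e1 : u^(4*J) = v^J := by rw [hvdef, ← pow_mul]
      have e2 : (v:ℝ)^J = ∏ j : Fin (i+1), v^((j:ℕ) * ns j) := by
        rw [Finset.prod_pow_eq_pow_sum, hJdef]
      have e3 : ∏ j : Fin (i+1), v^((j:ℕ) * ns j)
          = v^(((0:Fin (i+1)):ℕ) * ns 0) * ∏ j ∈ univ.erase (0 : Fin (i+1)), v^((j:ℕ) * ns j) :=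
        (Finset.mul_prod_erase univ _ (mem_univ 0)).symm
      rw [e1, e2, e3]
      simp only [Fin.val_zero, Nat.zero_mul, pow_zero, one_mul]
      exact Finset.prod_congr rfl fun j _ => by rw [pow_mul]
    calc (∏ j, (t (ns j)).eval q) * q ^ Ldeg (i+1) ns
        ≤ (Mb * A^s) * q ^ Ldeg (i+1) ns := by
          apply mul_le_mul_of_nonneg_right h1 hq0'
      _ ≤ (Mb * A^s) * u^(2*n'*s + n' + 4*J) := by
          apply mul_le_mul_of_nonneg_left hexp (by positivity)
      _ = (A^s * u^(2*n'*s)) * (Mb * (u^n' * u^(4*J))) := by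
          rw [pow_add, pow_add]; ring
      _ ≤ A^N0 * (Mb * (u^n' * u^(4*J))) := by
          apply mul_le_mul_of_nonneg_right h5
          have : (0:ℝ) ≤ u^n' * u^(4*J) := by positivity
          positivity
      _ = (Mb * A^N0 * u^n') * u^(4*J) := by ring
      _ = (Mb * A^N0 * u^n') * ∏ j ∈ univ.erase (0 : Fin (i+1)), ((v^((j:ℕ)))^(ns j)) := by
          rw [hJeq]
  -- sum it
  have hdrop : ∑ ns ∈ (Finset.Nat.antidiagonalTuple (i+1) n').erase (Fin.cons n' (0 : Fin i → ℕ)),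
      ∏ j ∈ univ.erase (0 : Fin (i+1)), ((v^((j:ℕ)))^(ns j)) ≤ (1-v)⁻¹^i := by
    calc ∑ ns ∈ (Finset.Nat.antidiagonalTuple (i+1) n').erase (Fin.cons n' (0 : Fin i → ℕ)),
        ∏ j ∈ univ.erase (0 : Fin (i+1)), ((v^((j:ℕ)))^(ns j))
        ≤ ∏ j ∈ univ.erase (0 : Fin (i+1)), ∑ tt ∈ range (n'+1), ((v^((j:ℕ)))^tt) := by
          apply drop_lemma (i+1) n' _ (Finset.erase_subset _ _) 0
            (fun j tt => (v^((j:ℕ)))^tt)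
          intro j tt; positivity
      _ ≤ ∏ _j ∈ univ.erase (0 : Fin (i+1)), (1-v)⁻¹ := by
          apply Finset.prod_le_prod
          · intro j _; apply Finset.sum_nonneg; intro tt _; positivity
          · intro j hj
            have hj1 : 1 ≤ (j:ℕ) := by
              rcases Finset.mem_erase.mp hj with ⟨hne, _⟩
              have : (j:ℕ) ≠ 0 := fun h => hne (Fin.ext (by simpa using h))
              omega
            have hvj1 : v^((j:ℕ)) < 1 := by
              calc v^((j:ℕ)) ≤ v^1 := pow_le_pow_of_le_one hv0 hv1.le hj1
                _ = v := pow_one v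
                _ < 1 := hv1
            have hvj0 : (0:ℝ) ≤ v^((j:ℕ)) := by positivity
            calc ∑ tt ∈ range (n'+1), ((v^((j:ℕ)))^tt) ≤ (1 - v^((j:ℕ)))⁻¹ :=
                  geom_bound _ hvj0 hvj1 _
              _ ≤ (1-v)⁻¹ := by
                  apply inv_anti₀ (by linarith)
                  have : v^((j:ℕ)) ≤ v := by
                    calc v^((j:ℕ)) ≤ v^1 := pow_le_pow_of_le_one hv0 hv1.le hj1
                      _ = v := pow_one v
                  linarith
      _ = (1-v)⁻¹^i := by
          rw [Finset.prod_const, Finset.card_erase_of_mem (mem_univ _), card_univ,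
            Fintype.card_fin]
          norm_num
  calc ∑ ns ∈ (Finset.Nat.antidiagonalTuple (i+1) n').erase (Fin.cons n' (0 : Fin i → ℕ)),
      (∏ j, (t (ns j)).eval q) * q ^ Ldeg (i+1) ns
      ≤ ∑ ns ∈ (Finset.Nat.antidiagonalTuple (i+1) n').erase (Fin.cons n' (0 : Fin i → ℕ)),
        (Mb * A^N0 * u^n') * ∏ j ∈ univ.erase (0 : Fin (i+1)), ((v^((j:ℕ)))^(ns j)) :=
        Finset.sum_le_sum hstep
    _ = (Mb * A^N0 * u^n') * ∑ ns ∈ (Finset.Nat.antidiagonalTuple (i+1) n').erase (Fin.cons n' (0 : Fin i → ℕ)),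
        ∏ j ∈ univ.erase (0 : Fin (i+1)), ((v^((j:ℕ)))^(ns j)) := by rw [Finset.mul_sum]
    _ ≤ (Mb * A^N0 * u^n') * (1-v)⁻¹^i := by
        apply mul_le_mul_of_nonneg_left hdrop (by positivity)
    _ = Mb * A^N0 * ((1-v)⁻¹^i * u^n') := by ring

lemma triangle_sum_bound (f : ℕ → ℝ) (hf : ∀ i, 0 ≤ f i) (u : ℝ) (hu0 : 0 ≤ u) (hu1 : u < 1)
    (S : ℝ) (hS : ∀ N, ∑ i ∈ Icc 1 N, f i ≤ S) (N : ℕ) :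
    ∑ n ∈ Icc 1 N, ∑ i ∈ Icc 1 n, f i * u^(n-i) ≤ S * (1-u)⁻¹ := by
  have hswap : ∀ n ∈ Icc 1 N, ∑ i ∈ Icc 1 n, f i * u^(n-i)
      = ∑ i ∈ Icc 1 N, (if i ≤ n then f i * u^(n-i) else 0) := by
    intro n hn
    rw [← Finset.sum_subset (Finset.Icc_subset_Icc_right (mem_Icc.mp hn).2)
      (fun i hiN hin => ?_)]
    · apply Finset.sum_congr rfl
      intro i hi
      rw [if_pos (mem_Icc.mp hi).2]
    · rw [if_neg]
      intro hle
      exact hin (mem_Icc.mpr ⟨(mem_Icc.mp hiN).1, hle⟩)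
  calc ∑ n ∈ Icc 1 N, ∑ i ∈ Icc 1 n, f i * u^(n-i)
      = ∑ n ∈ Icc 1 N, ∑ i ∈ Icc 1 N, (if i ≤ n then f i * u^(n-i) else 0) :=
        Finset.sum_congr rfl hswap
    _ = ∑ i ∈ Icc 1 N, ∑ n ∈ Icc 1 N, (if i ≤ n then f i * u^(n-i) else 0) :=
        Finset.sum_comm
    _ ≤ ∑ i ∈ Icc 1 N, f i * (1-u)⁻¹ := by
        apply Finset.sum_le_sum
        intro i hi
        rcases mem_Icc.mp hi with ⟨hi1, hiN⟩
        have hinner : ∑ n ∈ Icc 1 N, (if i ≤ n then f i * u^(n-i) else 0)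
            = ∑ n ∈ Icc i N, f i * u^(n-i) := by
          rw [← Finset.sum_subset (Finset.Icc_subset_Icc_left hi1) (fun n hnN hni => ?_)]
          · apply Finset.sum_congr rfl
            intro n hn
            rw [if_pos (mem_Icc.mp hn).1]
          · rw [if_neg]
            intro hle
            exact hni (mem_Icc.mpr ⟨hle, (mem_Icc.mp hnN).2⟩)
        rw [hinner]
        calc ∑ n ∈ Icc i N, f i * u^(n-i)
            = f i * ∑ n ∈ Icc i N, u^(n-i) := by rw [Finset.mul_sum]
          _ ≤ f i * (1-u)⁻¹ := by
              apply mul_le_mul_of_nonneg_left _ (hf i)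
              have hre : ∑ n ∈ Icc i N, u^(n-i) = ∑ j ∈ range (N+1-i), u^j := by
                rw [← Finset.Ico_add_one_right_eq_Icc, Finset.sum_Ico_eq_sum_range]
                apply Finset.sum_congr rfl
                intro j _
                congr 1
                omega
              rw [hre]
              exact geom_bound u hu0 hu1 _
    _ = (∑ i ∈ Icc 1 N, f i) * (1-u)⁻¹ := by rw [Finset.sum_mul]
    _ ≤ S * (1-u)⁻¹ := by
        apply mul_le_mul_of_nonneg_right (hS N)
        have : (0:ℝ) < 1 - u := by linarith
        positivity

lemma gronwall (M γ : ℕ → ℝ) (hM0 : M 0 = 1)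
    (hstep : ∀ n, 1 ≤ n → M n ≤ M (n-1) * (1 + γ n)) (hγ0 : ∀ n, 0 ≤ γ n)
    (B : ℝ) (hB : ∀ N, ∑ n ∈ Icc 1 N, γ n ≤ B) : ∀ n, M n ≤ Real.exp B := by
  have key : ∀ n, M n ≤ Real.exp (∑ k ∈ Icc 1 n, γ k) := by
    intro n
    induction n with
    | zero => simp [hM0]
    | succ m ih =>
      have h1 := hstep (m+1) (by omega)
      simp only [Nat.add_sub_cancel] at h1
      calc M (m+1) ≤ M m * (1 + γ (m+1)) := h1
        _ ≤ Real.exp (∑ k ∈ Icc 1 m, γ k) * Real.exp (γ (m+1)) := by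
            apply mul_le_mul ih _ (by linarith [hγ0 (m+1)]) (Real.exp_nonneg _)
            have := Real.add_one_le_exp (γ (m+1))
            linarith
        _ = Real.exp (∑ k ∈ Icc 1 (m+1), γ k) := by
            rw [← Real.exp_add, Finset.sum_Icc_succ_top (by omega)]
  intro n
  exact le_trans (key n) (Real.exp_le_exp.mpr (hB n))


/-- assume `φ_n ≥ 0` with `∑ φ_n = 1` (so `ζ = 1`), superexponential
decay `limsup (log φ_n)/(n log n) < −2` (expressed as: eventually
`φ_n ≤ exp(c n log n)` for some `c < −2`), and `θ(z) = (1 − φ(z))/(1 − z)` extends to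
an entire function with no zeros in `|z| ≤ 1`.  Then for every `q ∈ [0,1)` there is
`r ∈ [0,1)` with `ε_n(q) ≤ r^n` for all large `n`, where
`ε_n = t_n − ∑_{i=1}^n φ_i t_{n−i}`. -/
theorem stmt17 (φ : ℕ → ℝ) (t : ℕ → Polynomial ℝ) (θ : ℂ → ℂ)
    (hφ0 : φ 0 = 0) (ht : IsTSeq φ t)
    (hnonneg : ∀ n, 1 ≤ n → 0 ≤ φ n)
    (hsum : HasSum φ 1)
    (hdecay : ∃ c : ℝ, c < -2 ∧
      ∀ᶠ n : ℕ in atTop, φ n ≤ Real.exp (c * (n : ℝ) * Real.log (n : ℝ)))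
    (hθdiff : Differentiable ℂ θ)
    (hθeq : ∀ z : ℂ, (1 - z) * θ z = 1 - ∑' i : ℕ, (φ i : ℂ) * z ^ i)
    (hθne : ∀ z : ℂ, ‖z‖ ≤ 1 → θ z ≠ 0) :
    ∀ q : ℝ, 0 ≤ q → q < 1 → ∃ r : ℝ, 0 ≤ r ∧ r < 1 ∧
      ∀ᶠ n : ℕ in atTop,
        (t n - ∑ i ∈ Finset.Icc 1 n, Polynomial.C (φ i) * t (n - i)).eval q ≤ r ^ n := by
  intro q hq0 hq1
  classical
  -- basic quantities
  set u : ℝ := q ^ ((8:ℝ)⁻¹) with hudef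
  have hu0 : 0 ≤ u := Real.rpow_nonneg hq0 _
  have hu8 : u^(8:ℕ) = q := by
    rw [hudef, ← Real.rpow_natCast (q ^ ((8:ℝ)⁻¹)) 8, ← Real.rpow_mul hq0]
    norm_num
  have hu1 : u < 1 := by
    rcases eq_or_lt_of_le hq0 with h | h
    · rw [hudef, ← h, Real.zero_rpow (by norm_num)]; norm_num
    · exact Real.rpow_lt_one hq0 hq1 (by norm_num)
  set v : ℝ := u^4 with hvdef
  have hv0 : 0 ≤ v := by positivity
  have hv1 : v < 1 := by
    calc v = u^4 := hvdef
      _ ≤ u^1 := pow_le_pow_of_le_one hu0 hu1.le (by omega)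
      _ = u := pow_one u
      _ < 1 := hu1
  set Cv : ℝ := (1-v)⁻¹ with hCvdef
  have hCv1 : 1 ≤ Cv := by
    rw [hCvdef]
    rw [le_inv_comm₀ (by norm_num) (by linarith)]
    linarith
  have hCv0 : 0 ≤ Cv := by linarith
  -- nonnegativity of φ-weighted sequences
  have hφ0' : ∀ i, 0 ≤ φ i := by
    intro i
    cases i with
    | zero => rw [hφ0]
    | succ m => exact hnonneg _ (by omega)
  -- summable weighted series
  have hsummable : ∀ R : ℝ, 1 ≤ R → Summable (fun i => φ i * R^i) := by
    intro R hR
    apply summable_helper (fun i => mul_nonneg (hφ0' i) (pow_nonneg (by linarith) i))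
    exact lem_geo hdecay R (1/2) hR (by norm_num)
  have hpartial : ∀ R : ℝ, 1 ≤ R → ∀ N, ∑ i ∈ Icc 1 N, φ i * R^i ≤ ∑' i, φ i * R^i := by
    intro R hR N
    exact Summable.sum_le_tsum _ (fun i _ => mul_nonneg (hφ0' i) (pow_nonneg (by linarith) i))
      (hsummable R hR)
  -- the constant A
  set S64 : ℝ := ∑' i, φ i * (64:ℝ)^i with hS64def
  set A : ℝ := max 1 (2*S64) with hAdef
  have hA1 : 1 ≤ A := le_max_left _ _
  have hA0 : 0 ≤ A := by linarith
  have hσA : ∀ m, (t m).eval 1 ≤ A^m := by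
    intro m
    have h := lemA_s17 ht hnonneg S64 (hpartial 64 (by norm_num)) m
    calc (t m).eval 1 ≤ A^m * (1/((m:ℝ)+1)^2) := h
      _ ≤ A^m * 1 := by
          apply mul_le_mul_of_nonneg_left _ (pow_nonneg hA0 m)
          rw [div_le_one (by positivity)]
          nlinarith [Nat.cast_nonneg (α := ℝ) m]
      _ = A^m := mul_one _
  -- N0
  obtain ⟨N0, hN0'⟩ : ∃ N0 : ℕ, u^N0 < A⁻¹ :=
    exists_pow_lt_of_lt_one (by positivity) hu1
  have hN0 : u^N0 * A ≤ 1 := by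
    calc u^N0 * A ≤ A⁻¹ * A := mul_le_mul_of_nonneg_right hN0'.le hA0
      _ ≤ 1 := by
        rcases eq_or_lt_of_le hA0 with h | h
        · rw [← h]; norm_num
        · rw [inv_mul_cancel₀ (ne_of_gt h)]
  set CA : ℝ := A^N0 with hCAdef
  have hCA1 : 1 ≤ CA := one_le_pow₀ hA1
  have hCA0 : 0 ≤ CA := by linarith
  -- SΦ
  set SΦ : ℝ := ∑' i, φ i * Cv^i with hSΦdef
  have hSΦ : ∀ N, ∑ i ∈ Icc 1 N, φ i * Cv^i ≤ SΦ := hpartial Cv hCv1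
  have hSΦ0 : 0 ≤ SΦ := by
    have := hSΦ 0
    simpa using this
  -- gamma
  set γ : ℕ → ℝ := fun n => ∑ i ∈ Icc 1 n, (φ i * Cv^i) * u^(n-i) with hγdef
  have hγ0 : ∀ n, 0 ≤ γ n := by
    intro n
    apply Finset.sum_nonneg
    intro i _
    have := hφ0' i
    positivity
  -- tau basic facts
  have hτ0 : ∀ m, 0 ≤ (t m).eval q := fun m =>
    (tau_nonneg_mono ht hnonneg m q q hq0 le_rfl).1
  have hτzero : (t 0).eval q = 1 := by rw [ht.1, Polynomial.eval_one]
  -- M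
  set M : ℕ → ℝ := fun nn => (Finset.range (nn+1)).sup'
    ⟨0, Finset.mem_range.mpr (Nat.succ_pos nn)⟩ (fun k => (t k).eval q) with hMdef
  have hMle : ∀ nn k, k ≤ nn → (t k).eval q ≤ M nn := by
    intro nn k hk
    exact Finset.le_sup' (fun k => (t k).eval q) (Finset.mem_range.mpr (by omega))
  have hM1 : ∀ nn, 1 ≤ M nn := fun nn => hτzero ▸ hMle nn 0 (Nat.zero_le nn)
  have hM0' : M 0 = 1 := by
    apply le_antisymm
    · apply Finset.sup'_le
      intro k hk
      have : k = 0 := by simpa using hk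
      rw [this, hτzero]
    · exact hM1 0
  have hM0le : ∀ nn, 0 ≤ M nn := fun nn => le_trans zero_le_one (hM1 nn)
  -- partial sums of φ at most 1
  have hφpart : ∀ n, ∑ i ∈ Icc 1 n, φ i ≤ 1 :=
    fun n => sum_le_hasSum _ (fun i _ => hφ0' i) hsum
  -- the inner splitting and epsilon bound
  have hkey : ∀ n, 1 ≤ n →
      ((t n).eval q - ∑ i ∈ Icc 1 n, φ i * (t (n-i)).eval q ≤ M (n-1) * CA * γ n ∧
       (t n).eval q ≤ M (n-1) * (1 + CA * γ n)) := by
    intro n hn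
    have hsplit : ∀ i ∈ Icc 1 n,
        (∑ ns ∈ Finset.Nat.antidiagonalTuple (i+1) (n-i),
          (∏ j, (t (ns j)).eval q) * q ^ Ldeg (i+1) ns)
        = (t (n-i)).eval q +
          ∑ ns ∈ (Finset.Nat.antidiagonalTuple (i+1) (n-i)).erase (Fin.cons (n-i) (0 : Fin i → ℕ)),
            (∏ j, (t (ns j)).eval q) * q ^ Ldeg (i+1) ns := by
      intro i hi
      have h := Finset.add_sum_erase (Finset.Nat.antidiagonalTuple (i+1) (n-i))
        (fun ns => (∏ j, (t (ns j)).eval q) * q ^ Ldeg (i+1) ns) (trivial_mem i (n-i))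
      rw [← h]
      congr 1
      rw [Ldeg_trivial, pow_zero, mul_one, Fin.prod_univ_succ]
      simp [hτzero]
    have hinner : ∀ i ∈ Icc 1 n,
        ∑ ns ∈ (Finset.Nat.antidiagonalTuple (i+1) (n-i)).erase (Fin.cons (n-i) (0 : Fin i → ℕ)),
            (∏ j, (t (ns j)).eval q) * q ^ Ldeg (i+1) ns
          ≤ M (n-1) * CA * (Cv^i * u^(n-i)) := by
      intro i hi
      rcases mem_Icc.mp hi with ⟨hi1, hin⟩
      have := inner_bound ht hnonneg q u A (M (n-1)) N0 hq0 hq1.le hu0 hu1 hu8 hA1 hσA hN0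
        (hM0le (n-1)) n i hi1 hin (fun k hk => hMle (n-1) k hk)
      rw [hCAdef, hCvdef, hvdef]
      exact this
    have hepsid : (t n).eval q - ∑ i ∈ Icc 1 n, φ i * (t (n-i)).eval q
        = ∑ i ∈ Icc 1 n, φ i *
          ∑ ns ∈ (Finset.Nat.antidiagonalTuple (i+1) (n-i)).erase (Fin.cons (n-i) (0 : Fin i → ℕ)),
            (∏ j, (t (ns j)).eval q) * q ^ Ldeg (i+1) ns := by
      rw [eval_rec ht q hn, ← Finset.sum_sub_distrib]
      apply Finset.sum_congr rfl
      intro i hi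
      rw [hsplit i hi]
      ring
    have hepsle : ∑ i ∈ Icc 1 n, φ i *
          (∑ ns ∈ (Finset.Nat.antidiagonalTuple (i+1) (n-i)).erase (Fin.cons (n-i) (0 : Fin i → ℕ)),
            (∏ j, (t (ns j)).eval q) * q ^ Ldeg (i+1) ns)
        ≤ M (n-1) * CA * γ n := by
      calc ∑ i ∈ Icc 1 n, φ i *
          (∑ ns ∈ (Finset.Nat.antidiagonalTuple (i+1) (n-i)).erase (Fin.cons (n-i) (0 : Fin i → ℕ)),
            (∏ j, (t (ns j)).eval q) * q ^ Ldeg (i+1) ns)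
          ≤ ∑ i ∈ Icc 1 n, φ i * (M (n-1) * CA * (Cv^i * u^(n-i))) := by
            apply Finset.sum_le_sum
            intro i hi
            exact mul_le_mul_of_nonneg_left (hinner i hi) (hφ0' i)
        _ = M (n-1) * CA * γ n := by
            rw [hγdef, Finset.mul_sum]
            apply Finset.sum_congr rfl
            intro i _
            ring
    constructor
    · rw [hepsid]; exact hepsle
    · have h1 : (t n).eval q = ∑ i ∈ Icc 1 n, φ i * (t (n-i)).eval q +
          ((t n).eval q - ∑ i ∈ Icc 1 n, φ i * (t (n-i)).eval q) := by ring
      rw [h1]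
      have h2 : ∑ i ∈ Icc 1 n, φ i * (t (n-i)).eval q ≤ M (n-1) := by
        calc ∑ i ∈ Icc 1 n, φ i * (t (n-i)).eval q
            ≤ ∑ i ∈ Icc 1 n, φ i * M (n-1) := by
              apply Finset.sum_le_sum
              intro i hi
              rcases mem_Icc.mp hi with ⟨hi1, hin⟩
              exact mul_le_mul_of_nonneg_left (hMle (n-1) (n-i) (by omega)) (hφ0' i)
          _ = (∑ i ∈ Icc 1 n, φ i) * M (n-1) := by rw [Finset.sum_mul]
          _ ≤ 1 * M (n-1) := mul_le_mul_of_nonneg_right (hφpart n) (hM0le (n-1))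
          _ = M (n-1) := one_mul _
      have h3 := hepsid ▸ hepsle
      calc ∑ i ∈ Icc 1 n, φ i * (t (n-i)).eval q +
            ((t n).eval q - ∑ i ∈ Icc 1 n, φ i * (t (n-i)).eval q)
          ≤ M (n-1) + M (n-1) * CA * γ n := by
            apply add_le_add h2
            rw [hepsid]
            exact hepsle
        _ = M (n-1) * (1 + CA * γ n) := by ring
  -- Gronwall
  have hMstep : ∀ n, 1 ≤ n → M n ≤ M (n-1) * (1 + CA * γ n) := by
    intro n hn
    apply Finset.sup'_le
    intro k hk
    have hkn : k ≤ n := by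
      have := Finset.mem_range.mp hk
      omega
    rcases Nat.lt_or_ge k n with h | h
    · calc (t k).eval q ≤ M (n-1) := hMle (n-1) k (by omega)
        _ = M (n-1) * 1 := (mul_one _).symm
        _ ≤ M (n-1) * (1 + CA * γ n) := by
            apply mul_le_mul_of_nonneg_left _ (hM0le (n-1))
            have := hγ0 n
            nlinarith
    · have : k = n := by omega
      rw [this]
      exact (hkey n hn).2
  set B : ℝ := CA * (SΦ * (1-u)⁻¹) with hBdef
  have hB : ∀ N, ∑ n ∈ Icc 1 N, CA * γ n ≤ B := by
    intro N
    rw [← Finset.mul_sum, hBdef]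
    apply mul_le_mul_of_nonneg_left _ hCA0
    exact triangle_sum_bound (fun i => φ i * Cv^i)
      (fun i => mul_nonneg (hφ0' i) (pow_nonneg hCv0 i)) u hu0 hu1 SΦ hSΦ N
  have hMB : ∀ n, M n ≤ Real.exp B :=
    gronwall M (fun n => CA * γ n) hM0' hMstep
      (fun n => mul_nonneg hCA0 (hγ0 n)) B hB
  set Minf : ℝ := Real.exp B with hMinfdef
  have hMinf0 : 0 < Minf := Real.exp_pos _
  -- final constants
  set ρ : ℝ := max u (1/2) with hρdef
  have hρ0 : 0 ≤ ρ := le_trans (by norm_num) (le_max_right _ _)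
  have hρpos : 0 < ρ := lt_of_lt_of_le (by norm_num) (le_max_right _ _)
  have hρ1 : ρ < 1 := max_lt hu1 (by norm_num)
  have huρ : u ≤ ρ := le_max_left _ _
  set r : ℝ := Real.sqrt (Real.sqrt ρ) with hrdef
  have hr0 : 0 ≤ r := Real.sqrt_nonneg _
  have hr4 : r^4 = ρ := by
    rw [hrdef, show (4:ℕ) = 2*2 from rfl, pow_mul, Real.sq_sqrt (Real.sqrt_nonneg ρ),
      Real.sq_sqrt hρ0]
  have hr1 : r < 1 := by
    have := hr4 ▸ hρ1
    exact (pow_lt_one_iff_of_nonneg hr0 (by norm_num)).mp this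
  have hrpos : 0 < r := by
    rw [hrdef]
    exact Real.sqrt_pos.mpr (Real.sqrt_pos.mpr hρpos)
  set K : ℝ := Minf * CA * (SΦ + (1-ρ)⁻¹) with hKdef
  have hK0 : 0 < K := by
    have h1 : 0 < (1-ρ)⁻¹ := by
      have h2 : 0 < 1 - ρ := by linarith
      positivity
    have h3 : 0 < SΦ + (1-ρ)⁻¹ := by linarith
    have h4 : 0 < Minf * CA := mul_pos hMinf0 (by linarith)
    rw [hKdef]
    exact mul_pos h4 h3
  -- eventual bounds
  obtain ⟨N1, hN1⟩ := eventually_atTop.mp (lem_geo hdecay Cv ρ hCv1 hρpos)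
  obtain ⟨N2, hN2⟩ := eventually_atTop.mp
    ((tendsto_pow_atTop_nhds_zero_of_lt_one hr0 hr1).eventually_lt_const
      (by positivity : (0:ℝ) < K⁻¹))
  refine ⟨r, hr0, hr1, ?_⟩
  rw [eventually_atTop]
  refine ⟨max (2*N1+2) (N2+2), ?_⟩
  intro n hn
  have hn2 : 2 ≤ n := le_trans (by omega) (le_trans (le_max_left _ _) hn)
  have hnN1 : 2*N1 ≤ n := le_trans (by omega) (le_trans (le_max_left _ _) hn)
  have hnN2 : N2 ≤ n - 2 := by
    have := le_trans (le_max_right _ _) hn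
    omega
  have hn1 : 1 ≤ n := by omega
  -- evaluate epsilon
  have heval : (t n - ∑ i ∈ Finset.Icc 1 n, Polynomial.C (φ i) * t (n - i)).eval q
      = (t n).eval q - ∑ i ∈ Icc 1 n, φ i * (t (n-i)).eval q := by
    rw [Polynomial.eval_sub, Polynomial.eval_finset_sum]
    congr 1
    apply Finset.sum_congr rfl
    intro i _
    rw [Polynomial.eval_mul, Polynomial.eval_C]
  rw [heval]
  -- gamma bound
  have hγbound : γ n ≤ (SΦ + (1-ρ)⁻¹) * ρ^(n/2) := by
    simp only [hγdef]
    rw [← Finset.sum_filter_add_sum_filter_not (Icc 1 n) (fun i => i ≤ n/2)]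
    have hpart1 : ∑ i ∈ (Icc 1 n).filter (fun i => i ≤ n/2), (φ i * Cv^i) * u^(n-i)
        ≤ SΦ * ρ^(n/2) := by
      calc ∑ i ∈ (Icc 1 n).filter (fun i => i ≤ n/2), (φ i * Cv^i) * u^(n-i)
          ≤ ∑ i ∈ (Icc 1 n).filter (fun i => i ≤ n/2), (φ i * Cv^i) * ρ^(n/2) := by
            apply Finset.sum_le_sum
            intro i hi
            rcases Finset.mem_filter.mp hi with ⟨hiIcc, hile⟩
            have h1 : u^(n-i) ≤ ρ^(n-i) := pow_le_pow_left₀ hu0 huρ _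
            have h2 : ρ^(n-i) ≤ ρ^(n/2) :=
              pow_le_pow_of_le_one hρ0 hρ1.le (by omega)
            apply mul_le_mul_of_nonneg_left (le_trans h1 h2)
            exact mul_nonneg (hφ0' i) (pow_nonneg hCv0 i)
        _ = (∑ i ∈ (Icc 1 n).filter (fun i => i ≤ n/2), φ i * Cv^i) * ρ^(n/2) := by
            rw [Finset.sum_mul]
        _ ≤ SΦ * ρ^(n/2) := by
            apply mul_le_mul_of_nonneg_right _ (pow_nonneg hρ0 _)
            calc ∑ i ∈ (Icc 1 n).filter (fun i => i ≤ n/2), φ i * Cv^i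
                ≤ ∑ i ∈ Icc 1 n, φ i * Cv^i := by
                  apply Finset.sum_le_sum_of_subset_of_nonneg (Finset.filter_subset _ _)
                  intro i _ _
                  exact mul_nonneg (hφ0' i) (pow_nonneg hCv0 i)
              _ ≤ SΦ := hSΦ n
    have hpart2 : ∑ i ∈ (Icc 1 n).filter (fun i => ¬ i ≤ n/2), (φ i * Cv^i) * u^(n-i)
        ≤ (1-ρ)⁻¹ * ρ^(n/2) := by
      calc ∑ i ∈ (Icc 1 n).filter (fun i => ¬ i ≤ n/2), (φ i * Cv^i) * u^(n-i)
          ≤ ∑ i ∈ (Icc 1 n).filter (fun i => ¬ i ≤ n/2), ρ^i := by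
            apply Finset.sum_le_sum
            intro i hi
            rcases Finset.mem_filter.mp hi with ⟨hiIcc, hile⟩
            have hiN1 : N1 ≤ i := by
              have h := Nat.div_le_div_right (c := 2) hnN1
              have h2 : n/2 < i := by omega
              have h3 : N1 ≤ n/2 := by omega
              omega
            have h4 : φ i * Cv^i ≤ ρ^i := hN1 i hiN1
            calc (φ i * Cv^i) * u^(n-i) ≤ (φ i * Cv^i) * 1 := by
                  apply mul_le_mul_of_nonneg_left (pow_le_one₀ hu0 hu1.le)
                  exact mul_nonneg (hφ0' i) (pow_nonneg hCv0 i)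
              _ = φ i * Cv^i := mul_one _
              _ ≤ ρ^i := h4
          _ ≤ ∑ i ∈ Icc (n/2+1) n, ρ^i := by
            apply Finset.sum_le_sum_of_subset_of_nonneg
            · intro i hi
              rcases Finset.mem_filter.mp hi with ⟨hiIcc, hile⟩
              rcases mem_Icc.mp hiIcc with ⟨h1, h2⟩
              exact mem_Icc.mpr ⟨by omega, h2⟩
            · intro i _ _
              exact pow_nonneg hρ0 i
          _ ≤ (1-ρ)⁻¹ * ρ^(n/2) := by
            rw [← Finset.Ico_add_one_right_eq_Icc, Finset.sum_Ico_eq_sum_range]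
            calc ∑ j ∈ range (n+1-(n/2+1)), ρ^(n/2+1+j)
                = ρ^(n/2+1) * ∑ j ∈ range (n+1-(n/2+1)), ρ^j := by
                  rw [Finset.mul_sum]
                  apply Finset.sum_congr rfl
                  intro j _
                  rw [← pow_add]
              _ ≤ ρ^(n/2+1) * (1-ρ)⁻¹ := by
                  apply mul_le_mul_of_nonneg_left (geom_bound ρ hρ0 hρ1 _)
                    (pow_nonneg hρ0 _)
              _ ≤ (1-ρ)⁻¹ * ρ^(n/2) := by
                  rw [mul_comm]
                  exact mul_le_mul_of_nonneg_left
                    (pow_le_pow_of_le_one hρ0 hρ1.le (by omega))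
                    (by have hx : 0 < 1 - ρ := by linarith
                        positivity)
    calc ∑ i ∈ (Icc 1 n).filter (fun i => i ≤ n/2), (φ i * Cv^i) * u^(n-i) +
          ∑ i ∈ (Icc 1 n).filter (fun i => ¬ i ≤ n/2), (φ i * Cv^i) * u^(n-i)
        ≤ SΦ * ρ^(n/2) + (1-ρ)⁻¹ * ρ^(n/2) := add_le_add hpart1 hpart2
      _ = (SΦ + (1-ρ)⁻¹) * ρ^(n/2) := by ring
  -- final chain
  have hfinal : (t n).eval q - ∑ i ∈ Icc 1 n, φ i * (t (n-i)).eval q ≤ K * ρ^(n/2) := by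
    calc (t n).eval q - ∑ i ∈ Icc 1 n, φ i * (t (n-i)).eval q
        ≤ M (n-1) * CA * γ n := (hkey n hn1).1
      _ ≤ Minf * CA * γ n := by
          apply mul_le_mul_of_nonneg_right _ (hγ0 n)
          exact mul_le_mul_of_nonneg_right (hMB (n-1)) hCA0
      _ ≤ Minf * CA * ((SΦ + (1-ρ)⁻¹) * ρ^(n/2)) := by
          apply mul_le_mul_of_nonneg_left hγbound
          positivity
      _ = K * ρ^(n/2) := by rw [hKdef]; ring
  have hρr : K * ρ^(n/2) ≤ r^n := by
    have h1 : ρ^(n/2) = r^(4*(n/2)) := by rw [pow_mul, hr4]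
    have h2 : r^(4*(n/2)) ≤ r^(n + (n-2)) := by
      apply pow_le_pow_of_le_one hr0 hr1.le
      omega
    have h3 : K * ρ^(n/2) ≤ K * (r^n * r^(n-2)) := by
      rw [h1, ← pow_add] at *
      exact mul_le_mul_of_nonneg_left h2 hK0.le
    have h4 : K * r^(n-2) ≤ 1 := by
      have h5 : r^(n-2) < K⁻¹ := hN2 (n-2) hnN2
      calc K * r^(n-2) ≤ K * K⁻¹ := mul_le_mul_of_nonneg_left h5.le hK0.le
        _ = 1 := mul_inv_cancel₀ (ne_of_gt hK0)
    calc K * ρ^(n/2) ≤ K * (r^n * r^(n-2)) := h3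
      _ = (K * r^(n-2)) * r^n := by ring
      _ ≤ 1 * r^n := mul_le_mul_of_nonneg_right h4 (pow_nonneg hr0 n)
      _ = r^n := one_mul _
  exact le_trans hfinal hρr
end
end

section
/- Let q>1 and let (φ_n)_{n≥1} be real numbers such that the series ∑_{j≥1} |φ_j|·q^{−j²/2}·z^j converges for every z>0. Define the sequence (h_k)_{k≥0} by h_0=1 and, for k≥1, (q^{−k}−1)·h_k = ∑_{m=0}^{k−1} φ_{k−m}·q^{−(k−m+1)(k+m)/2}·h_m. Then ∑_{k≥0} |h_k|·x^k < ∞ for every x>0; that is, h(z)=∑_{k≥0} h_k z^k has infinite radius of convergence. -/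
open Filter Finset

/-- let `q > 1` and `(φ_n)` with `∑_{j≥1} |φ_j| q^{−j²/2} z^j < ∞` for
every `z > 0`.  If `h_0 = 1` and for `k ≥ 1`,
`(q^{−k} − 1) h_k = ∑_{m=0}^{k−1} φ_{k−m} q^{−(k−m+1)(k+m)/2} h_m`
(the exponent `(k−m+1)(k+m)` is even, so division by 2 is exact), then
`∑_k |h_k| x^k < ∞` for every `x > 0`: `h` has infinite radius of convergence. -/
theorem stmt19 (q : ℝ) (φ : ℕ → ℝ) (h : ℕ → ℝ)
    (hq : 1 < q)
    (hGevrey : ∀ z : ℝ, 0 < z →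
      Summable fun j : ℕ => |φ j| * q ^ (-((j : ℝ) ^ 2) / 2) * z ^ j)
    (h0 : h 0 = 1)
    (hrec : ∀ k : ℕ, 1 ≤ k →
      ((q ^ k)⁻¹ - 1) * h k =
        ∑ m ∈ Finset.range k, φ (k - m) * h m / q ^ ((k - m + 1) * (k + m) / 2)) :
    ∀ x : ℝ, 0 < x → Summable fun k : ℕ => |h k| * x ^ k := by
  have hq0 : (0:ℝ) < q := lt_trans one_pos hq
  have hqi : q⁻¹ < 1 := by
    nlinarith [mul_inv_cancel₀ (ne_of_gt hq0), inv_pos.mpr hq0]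
  set C : ℝ := (1 - q⁻¹)⁻¹ with hCdef
  have hC0 : 0 < C := inv_pos.2 (by linarith)
  set c : ℕ → ℝ := fun j => C * |φ j| * q ^ (((j:ℝ) - (j:ℝ)^2)/2) with hcdef
  have hc0 : ∀ j, 0 ≤ c j := fun j => by positivity
  -- summability of the majorant coefficients
  have hcsum : ∀ y : ℝ, 0 < y → Summable fun j : ℕ => c j * y ^ j := by
    intro y hy
    have hz : 0 < q ^ ((1:ℝ)/2) * y := by positivity
    refine ((hGevrey _ hz).mul_left C).congr fun j => ?_
    have h1 : (q ^ ((1:ℝ)/2) * y) ^ j = q ^ ((j:ℝ)/2) * y ^ j := by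
      rw [mul_pow]
      congr 1
      rw [← Real.rpow_natCast (q ^ ((1:ℝ)/2)) j, ← Real.rpow_mul hq0.le]
      ring_nf
    have h2 : q ^ (((j:ℝ) - (j:ℝ)^2)/2) = q ^ (-((j:ℝ)^2)/2) * q ^ ((j:ℝ)/2) := by
      rw [← Real.rpow_add hq0]
      ring_nf
    simp only [hcdef, h1, h2]
    ring
  -- the key termwise estimate on the kernel
  have L3 : ∀ k m : ℕ, m < k →
      |φ (k-m)| / q ^ ((k - m + 1) * (k + m) / 2) ≤
      |φ (k-m)| * q ^ ((((k-m : ℕ):ℝ) - ((k-m : ℕ):ℝ)^2)/2) * q ^ (-(k:ℝ)) := by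
    intro k m hmk
    obtain ⟨j, rfl⟩ : ∃ j, k = m + (j+1) := ⟨k - m - 1, by omega⟩
    have hsub : m + (j+1) - m = j + 1 := by omega
    rw [hsub]
    set N : ℕ := (j + 1 + 1) * (m + (j + 1) + m) / 2 with hN
    have hEv : Even ((j + 1 + 1) * (m + (j + 1) + m)) := by
      rw [Nat.even_mul, Nat.even_iff, Nat.even_iff]
      omega
    have h2N : 2 * N = (j + 1 + 1) * (m + (j + 1) + m) := by
      rw [hN, mul_comm]
      exact Nat.div_two_mul_two_of_even hEv
    have hqN : (q : ℝ) ^ (N : ℕ) = q ^ ((N : ℕ) : ℝ) := (Real.rpow_natCast q N).symm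
    have hexp : q ^ (-((N:ℕ):ℝ)) ≤
        q ^ (((((j+1) : ℕ):ℝ) - (((j+1) : ℕ):ℝ)^2)/2 + (-((m + (j+1) : ℕ):ℝ))) := by
      rw [Real.rpow_le_rpow_left_iff hq]
      have h2N' : 2 * ((N:ℕ):ℝ) = ((j:ℝ) + 1 + 1) * ((m:ℝ) + (j + 1) + m) := by
        exact_mod_cast congrArg (Nat.cast : ℕ → ℝ) h2N
      push_cast
      nlinarith [Nat.cast_nonneg (α := ℝ) m, Nat.cast_nonneg (α := ℝ) j]
    calc |φ (j+1)| / q ^ ((j + 1 + 1) * (m + (j + 1) + m) / 2)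
        = |φ (j+1)| * q ^ (-((N:ℕ):ℝ)) := by
          rw [div_eq_mul_inv, ← Real.rpow_natCast q N, ← Real.rpow_neg hq0.le]
      _ ≤ |φ (j+1)| * q ^ (((((j+1) : ℕ):ℝ) - (((j+1) : ℕ):ℝ)^2)/2 + (-((m + (j+1) : ℕ):ℝ))) :=
          mul_le_mul_of_nonneg_left hexp (abs_nonneg _)
      _ = |φ (j+1)| * q ^ ((((j+1 : ℕ):ℝ) - ((j+1 : ℕ):ℝ)^2)/2) * q ^ (-((m + (j+1) : ℕ):ℝ)) := by
          rw [Real.rpow_add hq0, mul_assoc]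
  -- the key recursive inequality
  have key : ∀ x : ℝ, 0 < x → ∀ k : ℕ, 1 ≤ k →
      |h k| * x ^ k ≤
        ∑ m ∈ Finset.range k, c (k-m) * (x/q) ^ (k-m) * (|h m| * (x/q) ^ m) := by
    intro x hx k hk
    have hqk1 : (1:ℝ) < q ^ k := one_lt_pow₀ hq (by omega)
    have hA : (0:ℝ) < 1 - (q ^ k)⁻¹ := by
      have : (q ^ k)⁻¹ < 1 := by
        nlinarith [mul_inv_cancel₀ (ne_of_gt (lt_trans one_pos hqk1)),
          inv_pos.mpr (lt_trans one_pos hqk1)]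
      linarith
    have habs : (1 - (q ^ k)⁻¹) * |h k| ≤
        ∑ m ∈ Finset.range k, |φ (k-m)| * |h m| / q ^ ((k - m + 1) * (k + m) / 2) := by
      have e1 : (1 - (q ^ k)⁻¹) * |h k| = |((q ^ k)⁻¹ - 1) * h k| := by
        rw [abs_mul, abs_of_neg (by linarith : (q ^ k)⁻¹ - 1 < 0)]
        ring
      rw [e1, hrec k hk]
      refine le_trans (Finset.abs_sum_le_sum_abs _ _) (Finset.sum_le_sum fun m hm => ?_)
      rw [abs_div, abs_mul, abs_of_pos (pow_pos hq0 _)]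
    -- bound the RHS termwise by L3
    have habs2 : (1 - (q ^ k)⁻¹) * |h k| ≤
        ∑ m ∈ Finset.range k,
          |φ (k-m)| * q ^ ((((k-m : ℕ):ℝ) - ((k-m : ℕ):ℝ)^2)/2) * q ^ (-(k:ℝ)) * |h m| := by
      refine le_trans habs (Finset.sum_le_sum fun m hm => ?_)
      rw [Finset.mem_range] at hm
      have := mul_le_mul_of_nonneg_right (L3 k m hm) (abs_nonneg (h m))
      calc |φ (k-m)| * |h m| / q ^ ((k - m + 1) * (k + m) / 2)
          = |φ (k-m)| / q ^ ((k - m + 1) * (k + m) / 2) * |h m| := by ring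
        _ ≤ |φ (k-m)| * q ^ ((((k-m : ℕ):ℝ) - ((k-m : ℕ):ℝ)^2)/2) * q ^ (-(k:ℝ)) * |h m| := this
    -- pass to |h k|
    have hCk : C⁻¹ ≤ 1 - (q ^ k)⁻¹ := by
      rw [hCdef, inv_inv]
      have : (q ^ k)⁻¹ ≤ q⁻¹ := by
        apply inv_anti₀ hq0
        calc q = q ^ 1 := (pow_one q).symm
          _ ≤ q ^ k := pow_le_pow_right₀ hq.le hk
      linarith
    have hhk : |h k| ≤ C * ((1 - (q ^ k)⁻¹) * |h k|) := by
      have h1 : C⁻¹ * |h k| ≤ (1 - (q ^ k)⁻¹) * |h k| :=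
        mul_le_mul_of_nonneg_right hCk (abs_nonneg _)
      have h2 := mul_le_mul_of_nonneg_left h1 hC0.le
      rwa [← mul_assoc, mul_inv_cancel₀ (ne_of_gt hC0), one_mul] at h2
    have hmain : |h k| ≤
        C * ∑ m ∈ Finset.range k,
          |φ (k-m)| * q ^ ((((k-m : ℕ):ℝ) - ((k-m : ℕ):ℝ)^2)/2) * q ^ (-(k:ℝ)) * |h m| :=
      le_trans hhk (mul_le_mul_of_nonneg_left habs2 hC0.le)
    calc |h k| * x ^ k
        ≤ (C * ∑ m ∈ Finset.range k,
            |φ (k-m)| * q ^ ((((k-m : ℕ):ℝ) - ((k-m : ℕ):ℝ)^2)/2) * q ^ (-(k:ℝ)) * |h m|) * x ^ k :=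
          mul_le_mul_of_nonneg_right hmain (pow_nonneg hx.le _)
      _ = ∑ m ∈ Finset.range k, c (k-m) * (x/q) ^ (k-m) * (|h m| * (x/q) ^ m) := by
          rw [Finset.mul_sum, Finset.sum_mul]
          refine Finset.sum_congr rfl fun m hm => ?_
          rw [Finset.mem_range] at hm
          have hk' : (k - m) + m = k := by omega
          have hxq : (x/q) ^ (k-m) * (x/q) ^ m = x ^ k / q ^ k := by
            rw [← pow_add, hk', div_pow]
          have hqnk : q ^ (-(k:ℝ)) = (q ^ k)⁻¹ := by
            rw [← Real.rpow_natCast q k, ← Real.rpow_neg hq0.le]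
          have hx' : x ^ k = x ^ (k-m) * x ^ m := by rw [← pow_add, hk']
          have hq' : q ^ k = q ^ (k-m) * q ^ m := by rw [← pow_add, hk']
          rw [hqnk, hx', hq']
          simp only [hcdef, div_pow]
          field_simp
  -- a crude exponential bound on |h k|
  have hDsum : Summable c := by
    have := hcsum 1 one_pos
    simpa using this
  set D : ℝ := ∑' j, c j with hDdef
  have hD0 : 0 ≤ D := tsum_nonneg hc0
  set K : ℝ := D + 1 with hKdef
  have hK1 : (1:ℝ) ≤ K := by linarith
  have hK0 : (0:ℝ) < K := by linarith
  have hgrow : ∀ k, |h k| ≤ K ^ k := by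
    intro k
    induction k using Nat.strong_induction_on with
    | _ k ih =>
      rcases Nat.eq_zero_or_pos k with rfl | hk
      · simp [h0]
      · have hkey := key 1 one_pos k hk
        rw [one_pow, mul_one] at hkey
        have hstep : ∀ m ∈ Finset.range k,
            c (k-m) * ((1:ℝ)/q) ^ (k-m) * (|h m| * ((1:ℝ)/q) ^ m) ≤ c (k-m) * K ^ (k-1) := by
          intro m hm
          rw [Finset.mem_range] at hm
          have hle1 : ((1:ℝ)/q) ^ (k-m) ≤ 1 := by
            apply pow_le_one₀ (by positivity)
            rw [div_le_one hq0]; linarith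
          have hle2 : ((1:ℝ)/q) ^ m ≤ 1 := by
            apply pow_le_one₀ (by positivity)
            rw [div_le_one hq0]; linarith
          have hhm : |h m| ≤ K ^ (k-1) := by
            calc |h m| ≤ K ^ m := ih m hm
              _ ≤ K ^ (k-1) := pow_le_pow_right₀ hK1 (by omega)
          calc c (k-m) * ((1:ℝ)/q) ^ (k-m) * (|h m| * ((1:ℝ)/q) ^ m)
              ≤ c (k-m) * 1 * (K ^ (k-1) * 1) := by
                apply mul_le_mul
                · exact mul_le_mul_of_nonneg_left hle1 (hc0 _)
                · exact mul_le_mul hhm hle2 (by positivity) (by positivity)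
                · positivity
                · positivity
            _ = c (k-m) * K ^ (k-1) := by ring
        have hsum2 : ∑ m ∈ Finset.range k, c (k-m) * K ^ (k-1) ≤ D * K ^ (k-1) := by
          rw [← Finset.sum_mul]
          refine mul_le_mul_of_nonneg_right ?_ (by positivity)
          have hrefl : ∑ m ∈ Finset.range k, c (k-m) = ∑ m ∈ Finset.range k, c (m+1) := by
            rw [← Finset.sum_range_reflect (fun m => c (m+1)) k]
            refine Finset.sum_congr rfl fun m hm => ?_
            rw [Finset.mem_range] at hm
            congr 1
            omega
          rw [hrefl]
          have h1 : ∑ m ∈ Finset.range k, c (m+1) ≤ ∑ m ∈ Finset.range (k+1), c m := by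
            rw [Finset.sum_range_succ']
            have := hc0 0
            linarith
          exact le_trans h1 (Summable.sum_le_tsum _ (fun i _ => hc0 i) hDsum)
        calc |h k| ≤ ∑ m ∈ Finset.range k, c (k-m) * ((1:ℝ)/q) ^ (k-m) * (|h m| * ((1:ℝ)/q) ^ m) := hkey
          _ ≤ ∑ m ∈ Finset.range k, c (k-m) * K ^ (k-1) := Finset.sum_le_sum hstep
          _ ≤ D * K ^ (k-1) := hsum2
          _ ≤ K * K ^ (k-1) := mul_le_mul_of_nonneg_right (by linarith) (by positivity)
          _ = K ^ k := by
            rw [← pow_succ']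
            congr 1
            omega
  -- base case: summability for a small x₀
  have hbase : Summable fun k : ℕ => |h k| * ((2*K)⁻¹) ^ k := by
    refine Summable.of_nonneg_of_le (fun k => by positivity) (fun k => ?_)
      (summable_geometric_of_lt_one (by norm_num) (by norm_num) (r := (1:ℝ)/2))
    calc |h k| * ((2*K)⁻¹) ^ k ≤ K ^ k * ((2*K)⁻¹) ^ k :=
          mul_le_mul_of_nonneg_right (hgrow k) (by positivity)
      _ = ((1:ℝ)/2) ^ k := by
          rw [← mul_pow]
          congr 1
          field_simp
  -- the scaling step
  have hstep : ∀ x : ℝ, 0 < x → Summable (fun k : ℕ => |h k| * x ^ k) →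
      Summable (fun k : ℕ => |h k| * (q*x) ^ k) := by
    intro x hx hsum
    set u : ℕ → ℝ := fun j => c j * x ^ j with hudef
    set v : ℕ → ℝ := fun m => |h m| * x ^ m with hvdef
    have hu0 : ∀ j, 0 ≤ u j := fun j => by positivity
    have hv0 : ∀ m, 0 ≤ v m := fun m => by positivity
    have hconv : Summable fun k => ∑ m ∈ Finset.range (k+1), u m * v (k-m) := by
      have h1 : Summable fun j => ‖u j‖ := by
        refine (hcsum x hx).congr fun j => ?_
        rw [Real.norm_eq_abs, abs_of_nonneg (hu0 j)]
      have h2 : Summable fun m => ‖v m‖ := by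
        refine hsum.congr fun m => ?_
        rw [Real.norm_eq_abs, abs_of_nonneg (hv0 m)]
      exact (summable_norm_sum_mul_range_of_summable_norm h1 h2).of_norm
    have hind : Summable fun k : ℕ => if k = 0 then (1:ℝ) else 0 :=
      summable_of_ne_finset_zero (s := {0}) (by intro b hb; simp at hb ⊢; omega)
    refine Summable.of_nonneg_of_le (fun k => by positivity) (fun k => ?_) (hconv.add hind)
    rcases Nat.eq_zero_or_pos k with rfl | hk
    · simp [h0]
      positivity
    · have hkey := key (q*x) (by positivity) k hk
      have hqx : q * x / q = x := by field_simp
      rw [hqx] at hkey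
      have hre : ∑ m ∈ Finset.range k, c (k-m) * x ^ (k-m) * (|h m| * x ^ m)
          ≤ ∑ m ∈ Finset.range (k+1), u m * v (k-m) := by
        rw [Finset.sum_range_succ']
        simp only [Nat.sub_zero]
        have hrefl : ∑ m ∈ Finset.range k, c (k-m) * x ^ (k-m) * (|h m| * x ^ m)
            = ∑ m ∈ Finset.range k, u (m+1) * v (k-(m+1)) := by
          rw [← Finset.sum_range_reflect (fun m => u (m+1) * v (k-(m+1))) k]
          refine Finset.sum_congr rfl fun m hm => ?_
          rw [Finset.mem_range] at hm
          have e1 : k - 1 - m + 1 = k - m := by omega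
          have e2 : k - (k - m) = m := by omega
          rw [e1, e2, hudef, hvdef]
        rw [hrefl]
        have : 0 ≤ u 0 * v k := mul_nonneg (hu0 0) (hv0 k)
        linarith
      have hif : (if k = 0 then (1:ℝ) else 0) = 0 := by
        simp
        omega
      rw [hif, add_zero]
      exact le_trans hkey hre
  -- monotonicity in x
  have hmono : ∀ x y : ℝ, 0 < x → x ≤ y → Summable (fun k : ℕ => |h k| * y ^ k) →
      Summable (fun k : ℕ => |h k| * x ^ k) := by
    intro x y hx hxy hsum
    refine Summable.of_nonneg_of_le (fun k => by positivity) (fun k => ?_) hsum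
    exact mul_le_mul_of_nonneg_left (pow_le_pow_left₀ hx.le hxy k) (abs_nonneg _)
  -- iterate the step
  have hiter : ∀ n : ℕ, Summable fun k : ℕ => |h k| * (q ^ n * (2*K)⁻¹) ^ k := by
    intro n
    induction n with
    | zero => simpa using hbase
    | succ n ih =>
      have := hstep _ (by positivity) ih
      refine this.congr fun k => ?_
      congr 2
      ring
  intro x hx
  obtain ⟨n, hn⟩ := pow_unbounded_of_one_lt (x * (2*K)) hq
  refine hmono x (q ^ n * (2*K)⁻¹) hx ?_ (hiter n)
  have h2K : (0:ℝ) < 2*K := by positivity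
  calc x = x * (2*K) * (2*K)⁻¹ := by field_simp
    _ ≤ q ^ n * (2*K)⁻¹ := mul_le_mul_of_nonneg_right hn.le (by positivity)
end
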